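/- arXiv:0909.3143 — 8 statements merged into one kernel-verified Lean document; each statement's English description precedes it below -/
import Mathlib

section
/- For a sequence (k_1,...,k_m) of nonnegative integers summing to n and a divisor d of n, the q-multinomial coefficient [n choose k_1,...,k_m]_q evaluated at a primitive d-th root of unity ω_d equals the ordinary multinomial coefficient (n/d choose k_1/d,...,k_m/d) if d divides every k_i, and equals 0 otherwise. -/
open Finset

/-- The `q`-analogue `[n]_q = 1 + q + ⋯ + q^{n-1}` as a polynomial over `ℂ`. -/
noncomputable def qInt (n : ℕ) : Polynomial ℂ := ∑ i ∈ Finset.range n, Polynomial.X ^ i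

/-- The `q`-factorial `[n]_q! = [n]_q [n-1]_q ⋯ [1]_q`. -/
noncomputable def qFact : ℕ → Polynomial ℂ
  | 0 => 1
  | n + 1 => qFact n * qInt (n + 1)

noncomputable def gP (d j : ℕ) : Polynomial ℂ :=
  ∑ t ∈ Finset.range (j / d), (Polynomial.X ^ d) ^ t

noncomputable def DP (d n : ℕ) : Polynomial ℂ :=
  ∏ j ∈ Finset.Ioc 0 n, if d ∣ j then gP d j else qInt j

lemma qFact_prod (n : ℕ) : qFact n = ∏ j ∈ Finset.Ioc 0 n, qInt j := by
  induction n with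
  | zero => simp [qFact]
  | succ n ih =>
      rw [qFact, ih, Finset.prod_Ioc_succ_top (Nat.zero_le n)]

lemma qInt_eq_mul {d j : ℕ} (hd : 0 < d) (hj : d ∣ j) :
    qInt j = qInt d * gP d j := by
  have hX : (Polynomial.X - 1 : Polynomial ℂ) ≠ 0 := by
    intro h
    have := congrArg (Polynomial.eval 0) h
    simp at this
  apply mul_right_cancel₀ hX
  have hg : gP d j * (Polynomial.X ^ d - 1) = Polynomial.X ^ j - 1 := by
    rw [gP, geom_sum_mul, ← pow_mul, Nat.mul_div_cancel' hj]
  have hdgs : qInt d * (Polynomial.X - 1 : Polynomial ℂ) = Polynomial.X ^ d - 1 :=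
    geom_sum_mul _ _
  calc qInt j * (Polynomial.X - 1) = Polynomial.X ^ j - 1 := geom_sum_mul _ _
    _ = gP d j * (Polynomial.X ^ d - 1) := hg.symm
    _ = gP d j * (qInt d * (Polynomial.X - 1)) := by rw [hdgs]
    _ = qInt d * gP d j * (Polynomial.X - 1) := by ring

lemma qFact_decomp {d : ℕ} (hd : 0 < d) (n : ℕ) :
    qFact n = qInt d ^ (n / d) * DP d n := by
  rw [qFact_prod, DP]
  rw [← Finset.prod_filter_mul_prod_filter_not (Finset.Ioc 0 n) (fun j => d ∣ j) qInt,
    ← Finset.prod_filter_mul_prod_filter_not (Finset.Ioc 0 n) (fun j => d ∣ j)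
      (fun j => if d ∣ j then gP d j else qInt j)]
  have h1 : ∏ j ∈ (Finset.Ioc 0 n).filter (fun j => d ∣ j), qInt j
      = qInt d ^ (n / d) * ∏ j ∈ (Finset.Ioc 0 n).filter (fun j => d ∣ j), gP d j := by
    rw [← Nat.Ioc_filter_dvd_card_eq_div n d, ← Finset.prod_const, ← Finset.prod_mul_distrib]
    apply Finset.prod_congr rfl
    intro j hj
    simp only [Finset.mem_filter] at hj
    exact qInt_eq_mul hd hj.2
  rw [h1]
  have h2 : ∏ j ∈ (Finset.Ioc 0 n).filter (fun j => d ∣ j),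
      (if d ∣ j then gP d j else qInt j) = ∏ j ∈ (Finset.Ioc 0 n).filter (fun j => d ∣ j),
      gP d j := by
    apply Finset.prod_congr rfl
    intro j hj
    simp only [Finset.mem_filter] at hj
    simp [hj.2]
  have h3 : ∏ j ∈ (Finset.Ioc 0 n).filter (fun j => ¬ d ∣ j),
      (if d ∣ j then gP d j else qInt j) = ∏ j ∈ (Finset.Ioc 0 n).filter (fun j => ¬ d ∣ j),
      qInt j := by
    apply Finset.prod_congr rfl
    intro j hj
    simp only [Finset.mem_filter] at hj
    simp [hj.2]
  rw [h2, h3]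
  ring

section eval
variable {d : ℕ} {ω : ℂ} (hω : IsPrimitiveRoot ω d)

include hω

lemma eval_gP (j : ℕ) : (gP d j).eval ω = (j / d : ℕ) := by
  simp [gP, Polynomial.eval_finset_sum, hω.pow_eq_one]

lemma eval_qInt_ne_zero {j : ℕ} (hj : ¬ d ∣ j) : (qInt j).eval ω ≠ 0 := by
  have hd1 : d ≠ 1 := by rintro rfl; exact hj (one_dvd j)
  have hω1 : ω ≠ 1 := by
    intro h
    exact hd1 (Nat.dvd_one.mp (hω.dvd_of_pow_eq_one 1 (by simp [h])))
  intro h0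
  have : (qInt j).eval ω * (ω - 1) = ω ^ j - 1 := by
    simp [qInt, Polynomial.eval_finset_sum, geom_sum_mul]
  rw [h0, zero_mul] at this
  have hωj : ω ^ j = 1 := by linear_combination -this
  exact hj (hω.dvd_of_pow_eq_one j hωj)

lemma eval_DP_ne_zero (n : ℕ) : (DP d n).eval ω ≠ 0 := by
  rw [DP, Polynomial.eval_prod]
  rw [Finset.prod_ne_zero_iff]
  intro j hj
  simp only [Finset.mem_Ioc] at hj
  by_cases h : d ∣ j
  · simp only [h, if_true, eval_gP hω]
    have : 0 < j / d := Nat.div_pos (Nat.le_of_dvd hj.1 h) (Nat.pos_of_dvd_of_pos h hj.1)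
    exact_mod_cast Nat.cast_ne_zero.mpr this.ne'
  · simpa [h] using eval_qInt_ne_zero hω h

lemma eval_qInt_add {j : ℕ} (hd2 : 2 ≤ d) :
    (qInt (j + d)).eval ω = (qInt j).eval ω := by
  have hz : ∑ i ∈ Finset.range d, ω ^ i = 0 := hω.geom_sum_eq_zero hd2
  simp only [qInt, Polynomial.eval_finset_sum, Polynomial.eval_pow, Polynomial.eval_X]
  rw [Finset.sum_range_add]
  simp [pow_add, ← Finset.mul_sum, hz]

lemma eval_qInt_mul_add {r : ℕ} (hd2 : 2 ≤ d) (t : ℕ) :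
    (qInt (d * t + r)).eval ω = (qInt r).eval ω := by
  induction t with
  | zero => simp
  | succ t ih =>
      have : d * (t + 1) + r = (d * t + r) + d := by ring
      rw [this, eval_qInt_add hω hd2, ih]

lemma eval_DP (hd : 0 < d) (t : ℕ) :
    (DP d (d * t)).eval ω =
      (t.factorial : ℂ) * (∏ r ∈ Finset.Ioo 0 d, (qInt r).eval ω) ^ t := by
  induction t with
  | zero => simp [DP]
  | succ t ih =>
      have h1 : d * t ≤ d * (t + 1) := Nat.mul_le_mul_left d (Nat.le_succ t)
      have hsplit : DP d (d * (t + 1)) = DP d (d * t) *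
          ∏ j ∈ Finset.Ioc (d * t) (d * (t + 1)), (if d ∣ j then gP d j else qInt j) := by
        rw [DP, DP, Finset.prod_Ioc_consecutive _ (Nat.zero_le (d * t)) h1]
      have hblock : ∏ j ∈ Finset.Ioc (d * t) (d * (t + 1)),
          ((if d ∣ j then gP d j else qInt j).eval ω) =
          ((t : ℂ) + 1) * ∏ r ∈ Finset.Ioo 0 d, (qInt r).eval ω := by
        have hmap : Finset.Ioc (d * t) (d * (t + 1)) =
            (Finset.Ioc 0 d).map (addLeftEmbedding (d * t)) := by
          rw [Finset.map_add_left_Ioc]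
          congr 1
        rw [hmap, Finset.prod_map]
        have hIoc : Finset.Ioc 0 d = insert d (Finset.Ioo 0 d) :=
          (Finset.Ioo_insert_right hd).symm
        rw [hIoc, Finset.prod_insert (by simp)]
        have hdd : d ∣ (d * t + d) := ⟨t + 1, by ring⟩
        have hterm : ((if d ∣ (addLeftEmbedding (d * t)) d then gP d ((addLeftEmbedding (d * t)) d)
            else qInt ((addLeftEmbedding (d * t)) d)).eval ω) = (t : ℂ) + 1 := by
          simp only [addLeftEmbedding_apply, hdd, if_true, eval_gP hω]
          have : (d * t + d) / d = t + 1 := by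
            rw [Nat.add_div_right _ hd, Nat.mul_div_cancel_left _ hd]
          rw [this]; push_cast; ring
        rw [hterm]
        congr 1
        apply Finset.prod_congr rfl
        intro r hr
        simp only [Finset.mem_Ioo] at hr
        have hd2 : 2 ≤ d := by omega
        have hnd : ¬ d ∣ (d * t + r) := by
          intro hdvd
          have : d ∣ r := (Nat.dvd_add_right ⟨t, rfl⟩).mp hdvd
          exact absurd (Nat.le_of_dvd (by omega) this) (by omega)
        simp only [addLeftEmbedding_apply, hnd, if_false]
        exact eval_qInt_mul_add hω hd2 t
      rw [hsplit, Polynomial.eval_mul, ih, Polynomial.eval_prod, hblock,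
        Nat.factorial_succ]
      push_cast
      ring
end eval

/-- For a sequence `(k 1, …, k m)` of nonnegative integers summing to `n` and a divisor `d`
of `n`, the `q`-multinomial coefficient (i.e. the polynomial `P` with
`P ⋅ ∏ᵢ [kᵢ]_q! = [n]_q!`) evaluated at a primitive `d`-th root of unity `ω` equals the
ordinary multinomial coefficient `(n/d choose k₁/d, …, k_m/d)` if `d` divides every `kᵢ`,
and `0` otherwise. -/
theorem qMultinomial_eval_primitiveRoot (m n d : ℕ) (k : Fin m → ℕ)
    (hsum : ∑ i, k i = n) (hd : 0 < d) (hdn : d ∣ n)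
    (ω : ℂ) (hω : IsPrimitiveRoot ω d)
    (P : Polynomial ℂ) (hP : P * ∏ i, qFact (k i) = qFact n) :
    P.eval ω =
      if ∀ i, d ∣ k i then (Nat.multinomial Finset.univ (fun i => k i / d) : ℂ) else 0 := by
  have hqd : (qInt d : Polynomial ℂ) ≠ 0 := by
    intro h
    have h1 := congrArg (Polynomial.eval 1) h
    simp [qInt, Polynomial.eval_finset_sum] at h1
    exact absurd (Nat.cast_eq_zero.mp h1) hd.ne'
  have hEne : ∀ r ∈ Finset.Ioo 0 d, (qInt r).eval ω ≠ 0 := by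
    intro r hr
    simp only [Finset.mem_Ioo] at hr
    exact eval_qInt_ne_zero hω (fun hdvd =>
      absurd (Nat.le_of_dvd hr.1 hdvd) (not_le.mpr hr.2))
  have hEne0 : (∏ r ∈ Finset.Ioo 0 d, (qInt r).eval ω) ≠ 0 :=
    Finset.prod_ne_zero_iff.mpr hEne
  set s := ∑ i, k i / d with hs
  have hPdec : P * qInt d ^ s * ∏ i, DP d (k i) = qInt d ^ (n / d) * DP d n := by
    rw [← qFact_decomp hd n, ← hP]
    rw [Finset.prod_congr rfl (fun i _ => qFact_decomp hd (k i)),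
      Finset.prod_mul_distrib, Finset.prod_pow_eq_pow_sum]
    ring
  by_cases hall : ∀ i, d ∣ k i
  · rw [if_pos hall]
    have hts : s = n / d := by
      apply Nat.eq_of_mul_eq_mul_left hd
      rw [hs, Finset.mul_sum]
      calc ∑ i, d * (k i / d) = ∑ i, k i :=
            Finset.sum_congr rfl (fun i _ => Nat.mul_div_cancel' (hall i))
        _ = n := hsum
        _ = d * (n / d) := (Nat.mul_div_cancel' hdn).symm
    have hkey : P * ∏ i, DP d (k i) = DP d n := by
      apply mul_left_cancel₀ (pow_ne_zero (n / d) hqd)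
      rw [← hts]
      calc qInt d ^ s * (P * ∏ i, DP d (k i)) = P * qInt d ^ s * ∏ i, DP d (k i) := by ring
        _ = qInt d ^ (n / d) * DP d n := hPdec
        _ = qInt d ^ s * DP d n := by rw [hts]
    have heval := congrArg (Polynomial.eval ω) hkey
    rw [Polynomial.eval_mul, Polynomial.eval_prod] at heval
    have hDn : (DP d n).eval ω =
        ((n / d).factorial : ℂ) * (∏ r ∈ Finset.Ioo 0 d, (qInt r).eval ω) ^ (n / d) := by
      rw [show n = d * (n / d) from (Nat.mul_div_cancel' hdn).symm] at heval ⊢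
      rw [eval_DP hω hd]
      rw [Nat.mul_div_cancel_left _ hd]
    have hDk : ∀ i, (DP d (k i)).eval ω =
        ((k i / d).factorial : ℂ) * (∏ r ∈ Finset.Ioo 0 d, (qInt r).eval ω) ^ (k i / d) := by
      intro i
      rw [show k i = d * (k i / d) from (Nat.mul_div_cancel' (hall i)).symm]
      rw [eval_DP hω hd, Nat.mul_div_cancel_left _ hd]
    rw [hDn, Finset.prod_congr rfl (fun i _ => hDk i), Finset.prod_mul_distrib,
      Finset.prod_pow_eq_pow_sum, ← hs, hts] at heval
    have hA : (∏ i, ((k i / d).factorial : ℂ)) ≠ 0 :=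
      Finset.prod_ne_zero_iff.mpr (fun i _ => Nat.cast_ne_zero.mpr (Nat.factorial_ne_zero _))
    have hmul : (Nat.multinomial Finset.univ (fun i => k i / d) : ℂ) *
        (∏ i, ((k i / d).factorial : ℂ)) = ((n / d).factorial : ℂ) := by
      have := Nat.multinomial_spec Finset.univ (fun i => k i / d)
      rw [← hts, hs]
      push_cast [← this]
      ring
    have hEpow : ((∏ r ∈ Finset.Ioo 0 d, (qInt r).eval ω) ^ (n / d)) ≠ 0 :=
      pow_ne_zero _ hEne0
    have h1 : P.eval ω * (∏ i, ((k i / d).factorial : ℂ)) = ((n / d).factorial : ℂ) := by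
      apply mul_right_cancel₀ hEpow
      calc P.eval ω * (∏ i, ((k i / d).factorial : ℂ)) *
            (∏ r ∈ Finset.Ioo 0 d, (qInt r).eval ω) ^ (n / d)
          = P.eval ω * ((∏ i, ((k i / d).factorial : ℂ)) *
            (∏ r ∈ Finset.Ioo 0 d, (qInt r).eval ω) ^ (n / d)) := by ring
        _ = ((n / d).factorial : ℂ) *
            (∏ r ∈ Finset.Ioo 0 d, (qInt r).eval ω) ^ (n / d) := heval
    apply mul_right_cancel₀ hA
    rw [h1, hmul]
  · rw [if_neg hall]
    push_neg at hall
    obtain ⟨i0, hi0⟩ := hall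
    have hd2 : 2 ≤ d := by
      rcases Nat.lt_or_ge d 2 with h | h
      · have hd1 : d = 1 := by omega
        subst hd1
        exact absurd (one_dvd _) hi0
      · exact h
    have hslt : s < n / d := by
      have hn : n = d * s + ∑ i, k i % d := by
        rw [hs, Finset.mul_sum, ← Finset.sum_add_distrib, ← hsum]
        exact Finset.sum_congr rfl (fun i _ => (Nat.div_add_mod (k i) d).symm)
      have hR0 : 0 < ∑ i, k i % d := by
        have h1 : 0 < k i0 % d := Nat.pos_of_ne_zero (fun h =>
          hi0 (Nat.dvd_of_mod_eq_zero h))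
        exact lt_of_lt_of_le h1 (Finset.single_le_sum (f := fun i => k i % d) (fun i _ => Nat.zero_le _)
          (Finset.mem_univ i0))
      have hdR : d ∣ ∑ i, k i % d :=
        (Nat.dvd_add_right ⟨s, rfl⟩).mp (hn ▸ hdn)
      have hRd : d ≤ ∑ i, k i % d := Nat.le_of_dvd hR0 hdR
      have : d * (s + 1) ≤ n := by
        rw [hn, Nat.mul_add, Nat.mul_one]
        omega
      exact Nat.lt_of_succ_le ((Nat.le_div_iff_mul_le hd).mpr (by linarith [this]))
    have hkey : P * ∏ i, DP d (k i) = qInt d ^ (n / d - s) * DP d n := by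
      apply mul_left_cancel₀ (pow_ne_zero s hqd)
      calc qInt d ^ s * (P * ∏ i, DP d (k i)) = P * qInt d ^ s * ∏ i, DP d (k i) := by ring
        _ = qInt d ^ (n / d) * DP d n := hPdec
        _ = qInt d ^ s * (qInt d ^ (n / d - s) * DP d n) := by
            rw [← mul_assoc, ← pow_add]
            congr 2
            omega
    have heval := congrArg (Polynomial.eval ω) hkey
    rw [Polynomial.eval_mul, Polynomial.eval_mul, Polynomial.eval_pow] at heval
    have hq0 : (qInt d).eval ω = 0 := by
      simpa [qInt, Polynomial.eval_finset_sum] using hω.geom_sum_eq_zero (by omega)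
    rw [hq0, zero_pow (by omega : n / d - s ≠ 0), zero_mul] at heval
    have hprodne : (∏ i, DP d (k i)).eval ω ≠ 0 := by
      rw [Polynomial.eval_prod]
      exact Finset.prod_ne_zero_iff.mpr (fun i _ => eval_DP_ne_zero hω (k i))
    exact (mul_eq_zero.mp heval).resolve_right hprodne
end

section
/- For any partition μ of n with parts μ_1,...,μ_l, the rational function T_μ(q) = ∏_{i=1}^n (1−q^i) / ∏_{i=1}^l (1−q^{μ_i}) is a polynomial in q. -/
open Finset Polynomial

lemma one_sub_pow_dvd (m k : ℕ) (h : m ∣ k) :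
    (1 - X ^ m : Polynomial ℚ) ∣ (1 - X ^ k) := by
  obtain ⟨c, rfl⟩ := h
  have : (1 - (X:Polynomial ℚ) ^ m) ∣ (1 - ((X:Polynomial ℚ) ^ m) ^ c) := by
    have := sub_dvd_pow_sub_pow (1 : Polynomial ℚ) (X ^ m) c
    simpa using this
  simpa [pow_mul] using this

lemma Tmu_aux : ∀ n : ℕ, ∀ s : Multiset ℕ, (∀ i ∈ s, 0 < i) → s.sum = n →
    (s.map fun i => (1 - Polynomial.X ^ i : Polynomial ℚ)).prod ∣
      ∏ i ∈ Finset.range n, (1 - Polynomial.X ^ (i + 1)) := by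
  intro n
  induction n using Nat.strong_induction_on with
  | _ n ih =>
    intro s hpos hsum
    rcases eq_or_ne s 0 with rfl | hne
    · simp
    · obtain ⟨m, hm⟩ := Multiset.exists_mem_of_ne_zero hne
      have hmpos : 0 < m := hpos m hm
      have hmn : m ≤ n := hsum ▸ Multiset.single_le_sum (fun i hi => (hpos i hi).le) m hm
      have hsum' : (s.erase m).sum = n - m := by
        rw [← Multiset.cons_erase hm, Multiset.sum_cons] at hsum
        omega
      have hrec := ih (n - m) (by omega) (s.erase m)
        (fun i hi => hpos i (Multiset.mem_of_mem_erase hi)) hsum'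
      -- split the big product
      have hsplit : ∏ i ∈ Finset.range n, (1 - (X:Polynomial ℚ) ^ (i + 1)) =
          (∏ i ∈ Finset.range (n - m), (1 - X ^ (i + 1))) *
          ∏ i ∈ Finset.Ico (n - m) n, (1 - X ^ (i + 1)) := by
        rw [Finset.prod_range_mul_prod_Ico _ (by omega : n - m ≤ n)]
      -- (1 - X^m) divides the block
      have hkmem : m * (n / m) - 1 ∈ Finset.Ico (n - m) n := by
        have h1 : m * (n / m) ≤ n := Nat.mul_div_le n m
        have h2 : n < m * (n / m) + m := by
          have h4 := Nat.div_add_mod n m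
          have := Nat.mod_lt n hmpos
          omega
        have h3 : m ≤ m * (n / m) := by
          have : 1 ≤ n / m := Nat.one_le_div_iff hmpos |>.mpr hmn
          nlinarith
        simp only [Finset.mem_Ico]
        omega
      have hdvdblock : (1 - (X:Polynomial ℚ) ^ m) ∣
          ∏ i ∈ Finset.Ico (n - m) n, (1 - X ^ (i + 1)) := by
        refine dvd_trans (one_sub_pow_dvd m (m * (n / m) - 1 + 1) ?_)
          (Finset.dvd_prod_of_mem _ hkmem)
        have h3 : m ≤ m * (n / m) := by
          have : 1 ≤ n / m := Nat.one_le_div_iff hmpos |>.mpr hmn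
          nlinarith
        have : m * (n / m) - 1 + 1 = m * (n / m) := by omega
        rw [this]
        exact Dvd.intro _ rfl
      rw [← Multiset.prod_map_erase (f := fun i => (1 - Polynomial.X ^ i : Polynomial ℚ)) hm,
        hsplit, mul_comm ((1:Polynomial ℚ) - X ^ m)]
      exact mul_dvd_mul hrec hdvdblock

/-- For any partition `μ` of `n`, the rational function
`T_μ(q) = ∏_{i=1}^n (1−q^i) / ∏_{i=1}^l (1−q^{μ_i})` is a polynomial in `q`;
that is, `∏_{i=1}^l (1−q^{μ_i})` divides `∏_{i=1}^n (1−q^i)`. -/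
theorem Tmu_is_polynomial (n : ℕ) (μ : Nat.Partition n) :
    (μ.parts.map fun i => (1 - Polynomial.X ^ i : Polynomial ℚ)).prod ∣
      ∏ i ∈ Finset.range n, (1 - Polynomial.X ^ (i + 1)) := by
  exact Tmu_aux n μ.parts (fun i hi => μ.parts_pos hi) μ.parts_sum
end

section
/- Let μ be a partition of n and let d be a positive integer with either dk = n or dk + 1 = n for some positive integer k. Then the polynomial T_μ(q) = ∏_{i=1}^n (1−q^i) / ∏_{i=1}^l (1−q^{μ_i}) evaluated at a primitive d-th root of unity ω_d equals z_μ if μ = d^k (all parts equal to d) or μ = 1d^k (one part equal to 1 and k parts equal to d), and equals 0 otherwise. Here z_μ = ∏_j j^{m_j(μ)} m_j(μ)! where m_j(μ) is the number of parts of μ equal to j. -/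
open Finset Polynomial

/-- `z_μ = ∏_j j^{m_j(μ)} m_j(μ)!`, where `m_j(μ)` is the number of parts of `μ` equal
to `j`. -/
def zPartition {n : ℕ} (μ : Nat.Partition n) : ℕ :=
  ∏ j ∈ Finset.range n, (j + 1) ^ (μ.parts.count (j + 1)) * (μ.parts.count (j + 1)).factorial

namespace TmuAux

lemma Ldiv (d i s : ℕ) (hd : 0 < d) (hs : i + 1 = d * s) : i / d = s - 1 := by
  have h1 : s ≠ 0 := by rintro rfl; simp at hs
  have h3 : d * (s - 1) + d = d * s := by rw [← Nat.mul_succ]; congr 1; omega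
  have h2 : i = d * (s - 1) + (d - 1) := by omega
  rw [h2, Nat.mul_add_div hd, Nat.div_eq_of_lt (by omega), Nat.add_zero]

lemma L1 {M : Type*} [CommMonoid M] (d n : ℕ) (hd : 0 < d) (f : ℕ → M) :
    ∏ i ∈ range n, f (i + 1) =
      (∏ j ∈ range (n / d), f (d * (j + 1))) *
        ∏ i ∈ (range n).filter (fun i => ¬ d ∣ (i + 1)), f (i + 1) := by
  rw [← prod_filter_mul_prod_filter_not (range n) (fun i => d ∣ (i + 1))]
  congr 1
  refine prod_nbij' (fun i => i / d) (fun j => d * j + (d - 1)) ?_ ?_ ?_ ?_ ?_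
  · intro i hi
    simp only [mem_filter, mem_range] at hi
    obtain ⟨hin, s, hs⟩ := hi
    simp only [mem_range]
    rw [Ldiv d i s hd hs]
    have h4 : s * d ≤ n := by rw [mul_comm, ← hs]; omega
    have h5 := (Nat.le_div_iff_mul_le hd).mpr h4
    have h1 : s ≠ 0 := by rintro rfl; simp at hs
    omega
  · intro j hj
    rw [mem_range] at hj
    have h2 : (j + 1) * d ≤ n := (Nat.le_div_iff_mul_le hd).mp hj
    have h3 : (j + 1) * d = d * j + d := by ring
    simp only [mem_filter, mem_range]
    exact ⟨by omega, ⟨j + 1, by rw [Nat.mul_succ]; omega⟩⟩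
  · intro i hi
    simp only [mem_filter, mem_range] at hi
    obtain ⟨hin, s, hs⟩ := hi
    rw [Ldiv d i s hd hs]
    have h1 : s ≠ 0 := by rintro rfl; simp at hs
    have h3 : d * (s - 1) + d = d * s := by rw [← Nat.mul_succ]; congr 1; omega
    omega
  · intro j hj
    rw [Nat.mul_add_div hd, Nat.div_eq_of_lt (by omega), Nat.add_zero]
  · intro i hi
    simp only [mem_filter, mem_range] at hi
    obtain ⟨hin, s, hs⟩ := hi
    rw [Ldiv d i s hd hs]
    congr 1
    have h1 : s - 1 + 1 = s := by
      have : s ≠ 0 := by rintro rfl; simp at hs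
      omega
    rw [h1]
    exact hs

lemma L4 (d : ℕ) (hd : 0 < d) (ω : ℂ) (hω : IsPrimitiveRoot ω d) :
    ∏ i ∈ range (d - 1), (1 - ω ^ (i + 1)) = d := by
  have h1 : (X : ℂ[X]) ^ d - C 1 = ∏ i ∈ range d, (X - C (ω ^ i * 1)) :=
    X_pow_sub_C_eq_prod hω hd (one_pow d)
  have h2 : (∑ i ∈ range d, (X : ℂ[X]) ^ i) * (X - 1) = X ^ d - 1 := geom_sum_mul X d
  have h3 : (∏ i ∈ range (d - 1), ((X : ℂ[X]) - C (ω ^ (i + 1)))) * (X - 1) =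
      (∑ i ∈ range d, (X : ℂ[X]) ^ i) * (X - 1) := by
    rw [h2]
    have h5 := prod_range_succ' (fun i => (X : ℂ[X]) - C (ω ^ i)) (d - 1)
    rw [Nat.sub_add_cancel hd] at h5
    simp only [mul_one] at h1
    rw [show ((X:ℂ[X]) ^ d - 1) = X ^ d - C 1 by simp, h1, h5]
    simp
  have h4 : (∏ i ∈ range (d - 1), ((X : ℂ[X]) - C (ω ^ (i + 1)))) =
      ∑ i ∈ range d, (X : ℂ[X]) ^ i :=
    mul_right_cancel₀ (X_sub_C_ne_zero 1) (by simpa using h3)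
  have h6 := congrArg (eval 1) h4
  simp only [eval_prod, eval_sub, eval_X, eval_C, eval_finset_sum, eval_pow, one_pow,
    sum_const, card_range, nsmul_eq_mul, mul_one] at h6
  exact h6

lemma LWblock (d : ℕ) (hd : 0 < d) (ω : ℂ) (hω : IsPrimitiveRoot ω d) :
    ∏ i ∈ range d, (if ¬ d ∣ (i + 1) then 1 - ω ^ (i + 1) else 1) = d := by
  have h : range d = range ((d - 1) + 1) := by congr 1; omega
  rw [h, prod_range_succ]
  have h1 : ¬ ¬ (d ∣ (d - 1 + 1)) := by rw [show d - 1 + 1 = d from by omega]; simp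
  rw [if_neg h1, mul_one]
  rw [← L4 d hd ω hω]
  apply prod_congr rfl
  intro i hi
  rw [mem_range] at hi
  rw [if_pos]
  intro ⟨s, hs⟩
  have h1 : s ≠ 0 := by rintro rfl; simp at hs
  have : d ≤ d * s := Nat.le_mul_of_pos_right d (Nat.pos_of_ne_zero h1)
  omega

lemma LWmul (d : ℕ) (hd : 0 < d) (ω : ℂ) (hω : IsPrimitiveRoot ω d) (k : ℕ) :
    ∏ i ∈ range (d * k), (if ¬ d ∣ (i + 1) then 1 - ω ^ (i + 1) else 1) = (d : ℂ) ^ k := by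
  induction k with
  | zero => simp
  | succ k ih =>
    rw [Nat.mul_succ, prod_range_add, ih, pow_succ]
    congr 1
    rw [← LWblock d hd ω hω]
    apply prod_congr rfl
    intro i _
    have hdvd : d ∣ (d * k + i + 1) ↔ d ∣ (i + 1) := by
      constructor
      · intro h; have := (Nat.dvd_add_right ⟨k, rfl⟩).mp (by rwa [add_assoc] at h); exact this
      · intro h; rw [add_assoc]; exact Nat.dvd_add ⟨k, rfl⟩ h
    have hpow : ω ^ (d * k + i + 1) = ω ^ (i + 1) := by
      rw [add_assoc, pow_add, pow_mul, hω.pow_eq_one, one_pow, one_mul]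
    simp only [hdvd, hpow]

lemma LW0 (d n : ℕ) (hd : 0 < d) (ω : ℂ) (hω : IsPrimitiveRoot ω d) (hdn : d ∣ n) :
    ∏ i ∈ (range n).filter (fun i => ¬ d ∣ (i + 1)), (1 - ω ^ (i + 1)) = (d : ℂ) ^ (n / d) := by
  obtain ⟨k, rfl⟩ := hdn
  rw [prod_filter, LWmul d hd ω hω k, Nat.mul_div_cancel_left k hd]

lemma LW1 (d k : ℕ) (hd : 2 ≤ d) (ω : ℂ) (hω : IsPrimitiveRoot ω d) :
    ∏ i ∈ (range (d * k + 1)).filter (fun i => ¬ d ∣ (i + 1)), (1 - ω ^ (i + 1)) =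
      (d : ℂ) ^ k * (1 - ω ^ (d * k + 1)) := by
  rw [prod_filter, prod_range_succ, LWmul d (by omega) ω hω k]
  congr 1
  rw [if_pos]
  intro ⟨s, hs⟩
  rcases Nat.lt_or_ge s (k + 1) with h | h
  · have : d * s ≤ d * k := Nat.mul_le_mul_left d (by omega)
    omega
  · have h6 : d * (k + 1) ≤ d * s := Nat.mul_le_mul_left d h
    have h7 : d * (k + 1) = d * k + d := by rw [Nat.mul_succ]
    omega

lemma Z1 {n : ℕ} (μ : Nat.Partition n) (d K : ℕ) (hd : 0 < d) (hdn : d ≤ n)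
    (h : μ.parts = Multiset.replicate K d) : zPartition μ = d ^ K * K.factorial := by
  unfold zPartition
  rw [Finset.prod_eq_single_of_mem (d - 1) (by rw [mem_range]; omega)]
  · rw [h, show d - 1 + 1 = d from by omega, Multiset.count_replicate, if_pos rfl]
  · intro j _ hj
    rw [h, Multiset.count_replicate, if_neg (by omega)]
    simp

lemma Z2 {n : ℕ} (μ : Nat.Partition n) (d K : ℕ) (hd : 2 ≤ d) (hdn : d < n)
    (h : μ.parts = 1 ::ₘ Multiset.replicate K d) : zPartition μ = d ^ K * K.factorial := by
  unfold zPartition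
  rw [Finset.prod_eq_single_of_mem (d - 1) (by rw [mem_range]; omega)]
  · rw [h, show d - 1 + 1 = d from by omega, Multiset.count_cons, Multiset.count_replicate,
      if_pos rfl, if_neg (by omega), Nat.add_zero]
  · intro j _ hj
    rw [h, Multiset.count_cons, Multiset.count_replicate, if_neg (by omega)]
    rcases eq_or_ne j 0 with rfl | hj0
    · norm_num
    · rw [if_neg (by omega)]; simp

noncomputable def Gpoly (d j : ℕ) : ℂ[X] := ∑ t ∈ range j, ((X : ℂ[X]) ^ d) ^ t

lemma Gfac (d j : ℕ) : (1 : ℂ[X]) - X ^ (d * j) = (1 - X ^ d) * Gpoly d j := by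
  have hg := geom_sum_mul ((X : ℂ[X]) ^ d) j
  rw [← pow_mul] at hg
  unfold Gpoly
  linear_combination hg

lemma Gone (d : ℕ) : Gpoly d 1 = 1 := by simp [Gpoly]

lemma Geval (d j : ℕ) (ω : ℂ) (h1 : ω ^ d = 1) : (Gpoly d j).eval ω = j := by
  simp [Gpoly, eval_finset_sum, h1]

lemma Nfac (d n : ℕ) (hd : 0 < d) :
    ∏ i ∈ range n, ((1 : ℂ[X]) - X ^ (i + 1)) =
      (1 - X ^ d) ^ (n / d) *
        ((∏ j ∈ range (n / d), Gpoly d (j + 1)) *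
          ∏ i ∈ (range n).filter (fun i => ¬ d ∣ (i + 1)), ((1 : ℂ[X]) - X ^ (i + 1))) := by
  have h1 : ∏ j ∈ range (n / d), ((1 : ℂ[X]) - X ^ (d * (j + 1))) =
      (1 - X ^ d) ^ (n / d) * ∏ j ∈ range (n / d), Gpoly d (j + 1) := by
    rw [prod_congr rfl (fun j _ => Gfac d (j + 1)), prod_mul_distrib, prod_const, card_range]
  rw [L1 d n hd (fun t => (1 : ℂ[X]) - X ^ t), h1, mul_assoc]

lemma Dfac (d : ℕ) (hd : 0 < d) (s : Multiset ℕ) (hs : ∀ a ∈ s, d ∣ a) :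
    (s.map fun i => (1 : ℂ[X]) - X ^ i).prod =
      (1 - X ^ d) ^ (Multiset.card s) * (s.map fun a => Gpoly d (a / d)).prod := by
  have h1 : (s.map fun i => (1 : ℂ[X]) - X ^ i) =
      s.map fun a => (1 - X ^ d) * Gpoly d (a / d) := by
    apply Multiset.map_congr rfl
    intro a ha
    rw [← Gfac, Nat.mul_div_cancel' (hs a ha)]
  rw [h1, Multiset.prod_map_mul, Multiset.map_const', Multiset.prod_replicate]

end TmuAux

/-- Let `μ` be a partition of `n`, with `n = dk` or `n = dk + 1`.  The polynomial
`T_μ(q) = ∏_{i=1}^n (1−q^i) / ∏_{i=1}^l (1−q^{μ_i})` (i.e. the polynomial `P` with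
`P ⋅ ∏ᵢ (1−q^{μᵢ}) = ∏_{i=1}^n (1−q^i)`) evaluated at a primitive `d`-th root of unity `ω`
equals `z_μ` if `μ = d^k` or `μ = 1 d^k`, and `0` otherwise. -/
theorem Tmu_eval_primitiveRoot (n d k : ℕ) (hd : 0 < d) (hk : 0 < k)
    (hn : n = d * k ∨ n = d * k + 1) (μ : Nat.Partition n)
    (ω : ℂ) (hω : IsPrimitiveRoot ω d)
    (P : Polynomial ℂ)
    (hP : P * (μ.parts.map fun i => (1 - Polynomial.X ^ i : Polynomial ℂ)).prod =
      ∏ i ∈ Finset.range n, (1 - Polynomial.X ^ (i + 1))) :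
    P.eval ω =
      if μ.parts = Multiset.replicate k d ∨ μ.parts = 1 ::ₘ Multiset.replicate k d then
        (zPartition μ : ℂ)
      else 0 := by
  classical
  obtain ⟨A, hA⟩ : ∃ A, A = μ.parts.filter (fun x => d ∣ x) := ⟨_, rfl⟩
  obtain ⟨B, hB⟩ : ∃ B, B = μ.parts.filter (fun x => ¬ d ∣ x) := ⟨_, rfl⟩
  obtain ⟨m, hm⟩ : ∃ m, m = n / d := ⟨_, rfl⟩
  obtain ⟨c, hc⟩ : ∃ c, c = Multiset.card A := ⟨_, rfl⟩
  have hAB : A + B = μ.parts := by rw [hA, hB]; exact Multiset.filter_add_not _ _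
  have hsum : μ.parts.sum = n := μ.parts_sum
  have hABsum : A.sum + B.sum = n := by rw [← Multiset.sum_add, hAB, hsum]
  have hA_dvd : ∀ a ∈ A, d ∣ a := by
    intro a ha; rw [hA] at ha; exact (Multiset.mem_filter.mp ha).2
  have hA_mem : ∀ a ∈ A, a ∈ μ.parts := by
    intro a ha; rw [hA] at ha; exact (Multiset.mem_filter.mp ha).1
  have hA_le : ∀ a ∈ A, d ≤ a := fun a ha =>
    Nat.le_of_dvd (μ.parts_pos (hA_mem a ha)) (hA_dvd a ha)
  have hB_not : ∀ b ∈ B, ¬ d ∣ b := by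
    intro b hb; rw [hB] at hb; exact (Multiset.mem_filter.mp hb).2
  have hB_pos : ∀ b ∈ B, 1 ≤ b := by
    intro b hb; rw [hB] at hb; exact μ.parts_pos (Multiset.mem_filter.mp hb).1
  have hAsum_ge : c * d ≤ A.sum := by
    have h := Multiset.card_nsmul_le_sum hA_le
    rw [smul_eq_mul, ← hc] at h
    exact h
  have hcm : c ≤ m := by
    rw [hm]
    exact (Nat.le_div_iff_mul_le hd).mpr (le_trans hAsum_ge (by omega))
  have hBcard : Multiset.card B ≤ B.sum := by
    have h := Multiset.card_nsmul_le_sum hB_pos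
    simpa using h
  obtain ⟨UA, hUA⟩ : ∃ UA, UA = (A.map fun a => TmuAux.Gpoly d (a / d)).prod := ⟨_, rfl⟩
  obtain ⟨UB, hUB⟩ : ∃ UB, UB = (B.map fun i => (1 : ℂ[X]) - X ^ i).prod := ⟨_, rfl⟩
  obtain ⟨Vg, hVg⟩ : ∃ Vg, Vg = ∏ j ∈ range m, TmuAux.Gpoly d (j + 1) := ⟨_, rfl⟩
  obtain ⟨Wp, hWp⟩ : ∃ Wp,
      Wp = ∏ i ∈ (range n).filter (fun i => ¬ d ∣ (i + 1)), ((1 : ℂ[X]) - X ^ (i + 1)) := ⟨_, rfl⟩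
  have hone : ((1 : ℂ[X]) - X ^ d) ≠ 0 := by
    intro h
    have h2 := congrArg (eval 0) h
    simp [zero_pow hd.ne'] at h2
  have hD : (μ.parts.map fun i => (1 : ℂ[X]) - X ^ i).prod = (1 - X ^ d) ^ c * (UA * UB) := by
    rw [← hAB, Multiset.map_add, Multiset.prod_add, TmuAux.Dfac d hd A hA_dvd, ← hc, ← hUA, ← hUB]
    ring
  have hcancel : P * (UA * UB) = (1 - X ^ d) ^ (m - c) * (Vg * Wp) := by
    apply mul_left_cancel₀ (pow_ne_zero c hone)
    calc (1 - X ^ d) ^ c * (P * (UA * UB))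
        = P * ((1 - X ^ d) ^ c * (UA * UB)) := by ring
      _ = P * (μ.parts.map fun i => (1 : ℂ[X]) - X ^ i).prod := by rw [hD]
      _ = ∏ i ∈ range n, (1 - X ^ (i + 1)) := hP
      _ = (1 - X ^ d) ^ m * (Vg * Wp) := by
          rw [hVg, hWp, hm]; exact TmuAux.Nfac d n hd
      _ = (1 - X ^ d) ^ c * ((1 - X ^ d) ^ (m - c) * (Vg * Wp)) := by
          conv_lhs => rw [show m = c + (m - c) from (Nat.add_sub_cancel' hcm).symm]
          rw [pow_add, mul_assoc]
  have hωd : ω ^ d = 1 := hω.pow_eq_one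
  have hUAeval : UA.eval ω = (A.map fun a => ((a / d : ℕ) : ℂ)).prod := by
    rw [hUA, eval_multiset_prod, Multiset.map_map]
    congr 1
    apply Multiset.map_congr rfl
    intro a _
    exact TmuAux.Geval d (a / d) ω hωd
  have hUBeval : UB.eval ω = (B.map fun b => 1 - ω ^ b).prod := by
    rw [hUB, eval_multiset_prod, Multiset.map_map]
    congr 1
    apply Multiset.map_congr rfl
    intro b _
    simp
  have hUAne : UA.eval ω ≠ 0 := by
    rw [hUAeval]
    apply Multiset.prod_ne_zero
    intro h0
    obtain ⟨a, ha, ha0⟩ := Multiset.mem_map.mp h0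
    have h1 : d ≤ a := hA_le a ha
    have h2 : 1 ≤ a / d := (Nat.one_le_div_iff hd).mpr h1
    have h3 : a / d = 0 := by exact_mod_cast ha0
    omega
  have hUBne : UB.eval ω ≠ 0 := by
    rw [hUBeval]
    apply Multiset.prod_ne_zero
    intro h0
    obtain ⟨b, hb, hb0⟩ := Multiset.mem_map.mp h0
    apply hB_not b hb
    have h1 : ω ^ b = 1 := by linear_combination -hb0
    exact (hω.pow_eq_one_iff_dvd b).mp h1
  have hVgeval : Vg.eval ω = (m.factorial : ℂ) := by
    rw [hVg, eval_prod]
    calc ∏ j ∈ range m, (TmuAux.Gpoly d (j + 1)).eval ω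
        = ∏ j ∈ range m, ((j + 1 : ℕ) : ℂ) :=
          prod_congr rfl (fun j _ => by exact_mod_cast TmuAux.Geval d (j + 1) ω hωd)
      _ = ((∏ j ∈ range m, (j + 1) : ℕ) : ℂ) := by push_cast; ring
      _ = (m.factorial : ℂ) := by rw [prod_range_add_one_eq_factorial]
  have heval := congrArg (eval ω) hcancel
  simp only [eval_mul, eval_pow] at heval
  have h1ωd : ((1 : ℂ[X]) - X ^ d).eval ω = 0 := by simp [hωd]
  rcases lt_or_eq_of_le hcm with hlt | heq
  · -- c < m : P.eval ω = 0, condition is false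
    have hP0 : P.eval ω = 0 := by
      rw [h1ωd, zero_pow (Nat.sub_ne_zero_of_lt hlt), zero_mul] at heval
      rcases mul_eq_zero.mp heval with h | h
      · exact h
      · rcases mul_eq_zero.mp h with h | h
        · exact absurd h hUAne
        · exact absurd h hUBne
    rw [hP0, if_neg]
    rintro (h1 | h2)
    · have hAeq : A = μ.parts := by
        rw [hA]
        apply Multiset.filter_eq_self.mpr
        intro a ha
        rw [h1] at ha
        rw [Multiset.eq_of_mem_replicate ha]
      have hceq : c = k := by rw [hc, hAeq, h1, Multiset.card_replicate]
      have hnval : n = k * d := by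
        rw [← hsum, h1, Multiset.sum_replicate, smul_eq_mul]
      have hkd : k * d = d * k := mul_comm k d
      have hn' : n = d * k := by omega
      have hmeq : m = k := by rw [hm, hn', Nat.mul_div_cancel_left k hd]
      omega
    · have hsum2 : n = 1 + k * d := by
        rw [← hsum, h2, Multiset.sum_cons, Multiset.sum_replicate, smul_eq_mul]
      have hkd : k * d = d * k := mul_comm k d
      rcases eq_or_lt_of_le (Nat.succ_le_of_lt hd) with hd1 | hd2
      · have hd1' : d = 1 := hd1.symm
        have hAeq : A = μ.parts := by
          rw [hA]
          exact Multiset.filter_eq_self.mpr (fun a _ => by rw [hd1']; exact one_dvd a)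
        have hceq : c = k + 1 := by
          rw [hc, hAeq, h2, Multiset.card_cons, Multiset.card_replicate]
        rw [hd1', mul_one] at hsum2
        have hmeq : m = k + 1 := by
          rw [hm, hd1', Nat.div_one]
          omega
        omega
      · have hnd1 : ¬ d ∣ 1 := by
          intro h
          have := Nat.le_of_dvd one_pos h
          omega
        have hAeq : A = Multiset.replicate k d := by
          rw [hA, h2, Multiset.filter_cons_of_neg _ hnd1]
          exact Multiset.filter_eq_self.mpr
            (fun a ha => by rw [Multiset.eq_of_mem_replicate ha])
        have hceq : c = k := by rw [hc, hAeq, Multiset.card_replicate]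
        have hmeq : m = k := by
          rw [hm, show n = d * k + 1 from by omega, Nat.mul_add_div hd,
            Nat.div_eq_of_lt (by omega), Nat.add_zero]
        omega
  · -- c = m
    have hcpos_or : A = Multiset.replicate m d := by
      rw [Multiset.eq_replicate]
      refine ⟨by omega, ?_⟩
      intro b hb
      by_contra hbd
      obtain ⟨A', hA'⟩ := Multiset.exists_cons_of_mem hb
      have hcard' : Multiset.card A' + 1 = c := by
        rw [hc, hA', Multiset.card_cons]
      have hsums : ∀ x ∈ A', d ≤ x := fun x hx =>
        hA_le x (by rw [hA']; exact Multiset.mem_cons_of_mem hx)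
      have h5 : Multiset.card A' * d ≤ A'.sum := by
        have h := Multiset.card_nsmul_le_sum hsums
        rw [smul_eq_mul] at h
        exact h
      obtain ⟨s, hs⟩ := hA_dvd b hb
      have hs2 : 2 ≤ s := by
        rcases Nat.lt_or_ge s 2 with h | h
        · interval_cases s
          · have := hA_le b hb; omega
          · rw [mul_one] at hs; exact absurd hs hbd
        · exact h
      have h6 : d * 2 ≤ d * s := Nat.mul_le_mul_left d hs2
      have h7 : A.sum = b + A'.sum := by rw [hA', Multiset.sum_cons]
      have hnd := Nat.div_add_mod n d
      have hmod := Nat.mod_lt n hd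
      have e3 : d * (n / d) = d * m := by rw [hm]
      have e4 : Multiset.card A' * d + d = (Multiset.card A' + 1) * d := by ring
      have e5 : c * d = d * c := mul_comm c d
      have e7 : (Multiset.card A' + 1) * d = c * d := by rw [hcard']
      have e6 : d * c = d * m := by rw [heq]
      omega
    rename' hcpos_or => hArep
    have hAsum : A.sum = m * d := by
      rw [hArep, Multiset.sum_replicate, smul_eq_mul]
    have hnd := Nat.div_add_mod n d
    have hmod := Nat.mod_lt n hd
    have e3 : d * (n / d) = d * m := by rw [hm]
    have emd : m * d = d * m := mul_comm m d
    have hBsum : B.sum = n % d := by omega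
    have hUAone : UA = 1 := by
      rw [hUA, hArep, Multiset.map_replicate, Nat.div_self hd, TmuAux.Gone,
        Multiset.prod_replicate, one_pow]
    rcases Nat.eq_zero_or_pos (n % d) with hmod0 | hmodpos
    · -- B = 0 case
      have hB0 : B = 0 := by
        have hc0 : Multiset.card B = 0 := by omega
        exact Multiset.card_eq_zero.mp hc0
      have hparts : μ.parts = Multiset.replicate m d := by
        rw [← hAB, hArep, hB0, add_zero]
      have hnm : n = d * m := by omega
      have hdkpos : 0 < d * k := Nat.mul_pos hd hk
      have hnpos : 0 < n := by rcases hn with rfl | rfl <;> omega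
      have hmpos : 0 < m := by
        rcases Nat.eq_zero_or_pos m with h | h
        · rw [h, Nat.mul_zero] at hnm; omega
        · exact h
      have hdn : d ≤ n := by
        have := Nat.mul_le_mul_left d hmpos
        rw [Nat.mul_one] at this
        omega
      have hcond : μ.parts = Multiset.replicate k d ∨ μ.parts = 1 ::ₘ Multiset.replicate k d := by
        rcases hn with hn1 | hn2
        · left
          rw [hparts]
          congr 1
          have : d * m = d * k := by omega
          exact Nat.eq_of_mul_eq_mul_left hd this
        · right
          have hd1 : d = 1 := by
            have h10 : d ∣ n := ⟨m, hnm⟩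
            have h11 : d ∣ d * k := dvd_mul_right d k
            rw [hn2] at h10
            have h12 := (Nat.dvd_add_right h11).mp h10
            exact Nat.dvd_one.mp h12
          have hmk : m = k + 1 := by
            rw [hd1] at hnm
            rw [hd1] at hn2
            omega
          rw [hparts, hd1, hmk, Multiset.replicate_succ]
      rw [if_pos hcond]
      have hmc0 : m - c = 0 := by omega
      have hUBev1 : UB.eval ω = 1 := by rw [hUB, hB0]; simp
      have hWpev : Wp.eval ω = (d : ℂ) ^ m := by
        rw [hWp, eval_prod]
        simp only [eval_sub, eval_one, eval_pow, eval_X]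
        rw [TmuAux.LW0 d n hd ω hω ⟨m, hnm⟩, ← hm]
      rw [hmc0, pow_zero, one_mul, hUAone, eval_one, one_mul, hUBev1, mul_one,
        hVgeval, hWpev] at heval
      rw [TmuAux.Z1 μ d m hd hdn hparts]
      push_cast
      rw [heval]
      ring
    · -- B = {1} case
      rcases hn with hn1 | hn2
      · exfalso
        have : n % d = 0 := by rw [hn1, Nat.mul_mod_right]
        omega
      have hd2 : 2 ≤ d := by
        by_contra h
        have hd1' : d = 1 := by omega
        rw [hd1', Nat.mod_one] at hmodpos
        omega
      have hmodeq : n % d = 1 := by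
        rw [hn2, Nat.mul_add_mod, Nat.mod_eq_of_lt (by omega)]
      have hmeq : m = k := by
        rw [hm, hn2, Nat.mul_add_div hd, Nat.div_eq_of_lt (by omega), Nat.add_zero]
      have hBsum1 : B.sum = 1 := by omega
      have hB1 : B = {1} := by
        have hcard1 : Multiset.card B = 1 := by
          rcases Nat.lt_or_ge (Multiset.card B) 1 with h | h
          · have : B = 0 := Multiset.card_eq_zero.mp (by omega)
            rw [this] at hBsum1
            simp at hBsum1
          · omega
        obtain ⟨b, hb⟩ := Multiset.card_eq_one.mp hcard1
        rw [hb] at hBsum1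
        rw [Multiset.sum_singleton] at hBsum1
        rw [hb, hBsum1]
      have hparts : μ.parts = 1 ::ₘ Multiset.replicate k d := by
        rw [← hAB, hArep, hmeq, hB1, add_comm, Multiset.singleton_add]
      rw [if_pos (Or.inr hparts)]
      have hmc0 : m - c = 0 := by omega
      have hUBev : UB.eval ω = 1 - ω := by rw [hUB, hB1]; simp
      have hWpev : Wp.eval ω = (d : ℂ) ^ k * (1 - ω) := by
        rw [hWp, eval_prod]
        simp only [eval_sub, eval_one, eval_pow, eval_X]
        rw [hn2, TmuAux.LW1 d k hd2 ω hω, pow_succ, pow_mul, hωd, one_pow, one_mul]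
      have hωne : (1 : ℂ) - ω ≠ 0 :=
        sub_ne_zero.mpr (Ne.symm (hω.ne_one (by omega)))
      rw [hmc0, pow_zero, one_mul, hUAone, eval_one, one_mul, hUBev,
        hVgeval, hWpev, hmeq] at heval
      have hdk1 : d * 1 ≤ d * k := Nat.mul_le_mul_left d hk
      rw [mul_one] at hdk1
      rw [TmuAux.Z2 μ d k hd2 (by omega) hparts]
      push_cast
      apply mul_right_cancel₀ hωne
      rw [heval]
      ring
end

section
/- For any positive integer k, the power series identity tA_{k−1}(t)/(1−t)^k = Σ_{j≥1} j^{k−1} t^j holds, where A_{k−1}(t) is the (k−1)-st Eulerian polynomial. -/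
open Finset Equiv

/-- The excedance number `exc(σ) = |{i : σ(i) > i}|`. -/
def excNum {n : ℕ} (σ : Equiv.Perm (Fin n)) : ℕ :=
  (Finset.univ.filter fun i : Fin n => (i : ℕ) < (σ i : ℕ)).card

/-- The number of fixed points `fix(σ) = |{i : σ(i) = i}|`. -/
def fixNum {n : ℕ} (σ : Equiv.Perm (Fin n)) : ℕ :=
  (Finset.univ.filter fun i : Fin n => σ i = i).card

/-- The value `σ(i)`, with positions indexed by `0, …, n-1`. -/
def permVal {n : ℕ} (σ : Equiv.Perm (Fin n)) (i : ℕ) : ℕ :=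
  if h : i < n then (σ ⟨i, h⟩ : ℕ) else 0

/-- The descent set of `σ` (0-indexed positions). -/
def desSet {n : ℕ} (σ : Equiv.Perm (Fin n)) : Finset ℕ :=
  (Finset.range (n - 1)).filter fun i => permVal σ (i + 1) < permVal σ i

/-- The descent number `des(σ)`. -/
def desNum {n : ℕ} (σ : Equiv.Perm (Fin n)) : ℕ := (desSet σ).card

/-- The major index `maj(σ) = Σ_{i ∈ Des(σ)} i` (with positions counted `1, …, n-1`). -/
def majNum {n : ℕ} (σ : Equiv.Perm (Fin n)) : ℕ := ∑ i ∈ desSet σ, (i + 1)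

/-- The Eulerian polynomial `A_n(t) = Σ_{σ ∈ S_n} t^{exc(σ)}`. -/
noncomputable def eulerianExc (n : ℕ) : Polynomial ℚ :=
  ∑ σ : Equiv.Perm (Fin n), Polynomial.X ^ excNum σ

/-- The Eulerian polynomial `A_n(t) = Σ_{σ ∈ S_n} t^{des(σ)}`. -/
noncomputable def eulerianDes (n : ℕ) : Polynomial ℚ :=
  ∑ σ : Equiv.Perm (Fin n), Polynomial.X ^ desNum σ

/- ### Auxiliary development -/

/-- Propagate a relation along adjacent steps in `Fin n`. -/
lemma fin_rel_of_adj {n : ℕ} {r : Fin n → Fin n → Prop}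
    (ht : ∀ {a b c : Fin n}, a < b → b < c → r a b → r b c → r a c)
    (ha : ∀ (i : ℕ) (h : i + 1 < n), r ⟨i, Nat.lt_of_succ_lt h⟩ ⟨i + 1, h⟩) :
    ∀ a b : Fin n, a < b → r a b := by
  have aux : ∀ (d : ℕ) (a b : Fin n), (b : ℕ) = (a : ℕ) + d + 1 → r a b := by
    intro d
    induction d with
    | zero =>
      intro a b hb
      have h : (a : ℕ) + 1 < n := hb ▸ b.2
      have hbb : b = ⟨(a : ℕ) + 1, h⟩ := by ext; simpa using hb
      rw [hbb]; exact ha a h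
    | succ d ih =>
      intro a b hb
      have hcn : (a : ℕ) + d + 1 < n := by have := b.2; omega
      set c : Fin n := ⟨(a : ℕ) + d + 1, hcn⟩ with hc
      have h1 : r a c := ih a c rfl
      have h2 : r c b := by
        have h : (c : ℕ) + 1 < n := by have := b.2; simp only [hc]; omega
        have hbb : b = ⟨(c : ℕ) + 1, h⟩ := by ext; simp only [hc]; omega
        rw [hbb]; exact ha c h
      exact ht (by rw [Fin.lt_def]; simp only [hc]; omega)
        (by rw [Fin.lt_def]; simp only [hc]; omega) h1 h2
  intro a b hab
  rw [Fin.lt_def] at hab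
  exact aux ((b : ℕ) - a - 1) a b (by omega)

lemma mem_desSet_iff {n : ℕ} (σ : Equiv.Perm (Fin n)) {i : ℕ} (h : i + 1 < n) :
    i ∈ desSet σ ↔ (σ ⟨i + 1, h⟩ : ℕ) < (σ ⟨i, Nat.lt_of_succ_lt h⟩ : ℕ) := by
  unfold desSet; rw [Finset.mem_filter, Finset.mem_range]
  simp only [permVal, dif_pos h, dif_pos (Nat.lt_of_succ_lt h)]
  exact ⟨fun hh => hh.2, fun hh => ⟨by omega, hh⟩⟩

lemma desSet_subset {n : ℕ} (σ : Equiv.Perm (Fin n)) : desSet σ ⊆ Finset.range (n - 1) :=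
  Finset.filter_subset _ _

lemma desNum_le {n : ℕ} (σ : Equiv.Perm (Fin n)) : desNum σ ≤ n - 1 := by
  have := Finset.card_le_card (desSet_subset σ)
  simpa [desNum] using this

/-- The number of non-descents of `σ` among positions `< i`. -/
def ndBelow {n : ℕ} (σ : Equiv.Perm (Fin n)) (i : ℕ) : ℕ :=
  ((Finset.range i).filter fun p => p ∉ desSet σ).card

lemma ndBelow_succ {n : ℕ} (σ : Equiv.Perm (Fin n)) (i : ℕ) :
    ndBelow σ (i + 1) = ndBelow σ i + (if i ∈ desSet σ then 0 else 1) := by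
  classical
  unfold ndBelow
  rw [Finset.range_add_one, Finset.filter_insert]
  by_cases h : i ∈ desSet σ
  · simp [h]
  · have hnotmem : i ∉ (Finset.range i).filter (fun p => p ∉ desSet σ) :=
      fun hc => by simpa using (Finset.mem_filter.1 hc).1
    simp [h, Finset.card_insert_of_notMem hnotmem]

lemma ndBelow_le_self {n : ℕ} (σ : Equiv.Perm (Fin n)) (i : ℕ) : ndBelow σ i ≤ i := by
  have := Finset.card_le_card (Finset.filter_subset (fun p => p ∉ desSet σ) (Finset.range i))
  simpa [ndBelow] using this

lemma ndBelow_mono {n : ℕ} (σ : Equiv.Perm (Fin n)) {a b : ℕ} (h : a ≤ b) :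
    ndBelow σ a ≤ ndBelow σ b :=
  Finset.card_le_card (Finset.filter_subset_filter _ (Finset.range_subset_range.2 h))

lemma ndBelow_le_add {n : ℕ} (σ : Equiv.Perm (Fin n)) {a b : ℕ} (h : a ≤ b) :
    ndBelow σ b ≤ ndBelow σ a + (b - a) := by
  obtain ⟨t, rfl⟩ := Nat.exists_eq_add_of_le h
  clear h
  induction t with
  | zero => simp
  | succ t ih =>
    rw [← Nat.add_assoc, ndBelow_succ]
    by_cases h : a + t ∈ desSet σ <;> simp [h] <;> omega

lemma ndBelow_total {n : ℕ} (σ : Equiv.Perm (Fin n)) :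
    ndBelow σ (n - 1) = (n - 1) - desNum σ := by
  have h2 : (Finset.range (n - 1)).filter (fun p => p ∈ desSet σ) = desSet σ := by
    rw [Finset.filter_mem_eq_inter]
    exact Finset.inter_eq_right.2 (desSet_subset σ)
  unfold ndBelow
  rw [Finset.filter_not, Finset.card_sdiff_of_subset (Finset.filter_subset _ _), Finset.card_range, h2]
  rfl

/-- Monotone functions that are strictly increasing at the descents of `σ`. -/
def Strictified {n j : ℕ} (σ : Equiv.Perm (Fin n)) (g : Fin n → Fin j) : Prop :=
  Monotone g ∧ ∀ (i : ℕ) (h : i + 1 < n), i ∈ desSet σ →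
    g ⟨i, Nat.lt_of_succ_lt h⟩ < g ⟨i + 1, h⟩

lemma sort_eq_iff_strictified {n j : ℕ} (σ : Equiv.Perm (Fin n)) (f : Fin n → Fin j) :
    Tuple.sort f = σ ↔ Strictified σ (f ∘ σ) := by
  rw [eq_comm, Tuple.eq_sort_iff]
  constructor
  · rintro ⟨hm, ht⟩
    refine ⟨hm, fun i h hdes => ?_⟩
    have hlt : (⟨i, Nat.lt_of_succ_lt h⟩ : Fin n) < ⟨i + 1, h⟩ := by rw [Fin.lt_def]; simp
    rcases lt_or_eq_of_le (hm hlt.le) with h1 | h1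
    · exact h1
    · exfalso
      have := ht _ _ hlt h1
      rw [mem_desSet_iff σ h] at hdes
      rw [Fin.lt_def] at this
      omega
  · rintro ⟨hm, hs⟩
    refine ⟨hm, ?_⟩
    have key : ∀ a b : Fin n, a < b →
        ((f ∘ σ) a ≤ (f ∘ σ) b ∧ ((f ∘ σ) a = (f ∘ σ) b → σ a < σ b)) := by
      refine fin_rel_of_adj ?_ ?_
      · rintro a b c hab hbc ⟨h1, h2⟩ ⟨h3, h4⟩
        refine ⟨h1.trans h3, fun he => ?_⟩
        have e1 : (f ∘ σ) a = (f ∘ σ) b := le_antisymm h1 (he ▸ h3)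
        have e2 : (f ∘ σ) b = (f ∘ σ) c := le_antisymm h3 (he ▸ h1)
        exact (h2 e1).trans (h4 e2)
      · intro i h
        have hlt : (⟨i, Nat.lt_of_succ_lt h⟩ : Fin n) < ⟨i + 1, h⟩ := by rw [Fin.lt_def]; simp
        refine ⟨hm hlt.le, fun he => ?_⟩
        by_cases hdes : i ∈ desSet σ
        · exact absurd he (hs i h hdes).ne
        · rw [mem_desSet_iff σ h] at hdes
          rw [Fin.lt_def]
          rcases lt_or_eq_of_le (not_lt.1 hdes) with h1 | h1
          · exact h1
          · exfalso
            have : σ ⟨i, Nat.lt_of_succ_lt h⟩ = σ ⟨i + 1, h⟩ := Fin.ext h1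
            have := σ.injective this
            simp [Fin.ext_iff] at this
    exact fun a b hab he => (key a b hab).2 he

/- ### The bijections -/

lemma strictified_card {n j : ℕ} (σ : Equiv.Perm (Fin n)) :
    Nat.card {g : Fin n → Fin j // Strictified σ g} =
      Nat.card {h : Fin n → Fin (j + ndBelow σ (n - 1)) // StrictMono h} := by
  classical
  have Fbound : ∀ (g : {g : Fin n → Fin j // Strictified σ g}) (i : Fin n),
      (g.1 i : ℕ) + ndBelow σ (i : ℕ) < j + ndBelow σ (n - 1) := by
    intro g i
    have h1 : (g.1 i : ℕ) < j := (g.1 i).2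
    have h2 : ndBelow σ (i : ℕ) ≤ ndBelow σ (n - 1) := ndBelow_mono σ (by have := i.2; omega)
    omega
  let F : {g : Fin n → Fin j // Strictified σ g} →
      {h : Fin n → Fin (j + ndBelow σ (n - 1)) // StrictMono h} := fun g =>
    ⟨fun i => ⟨(g.1 i : ℕ) + ndBelow σ (i : ℕ), Fbound g i⟩, by
      intro a b hab
      rw [Fin.lt_def]
      revert a b hab
      refine fin_rel_of_adj (fun hab hbc h1 h2 => h1.trans h2) ?_
      intro i h
      simp only
      rw [ndBelow_succ]
      by_cases hdes : i ∈ desSet σ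
      · have := g.2.2 i h hdes
        rw [Fin.lt_def] at this
        simp only [hdes, if_pos]
        omega
      · have hlt : (⟨i, Nat.lt_of_succ_lt h⟩ : Fin n) ≤ ⟨i + 1, h⟩ := by
          rw [Fin.le_def]; simp
        have := g.2.1 hlt
        rw [Fin.le_def] at this
        simp only [hdes, if_neg, not_false_iff]
        omega⟩
  apply Nat.card_eq_of_bijective F
  constructor
  · intro g g' he
    apply Subtype.ext
    funext i
    apply Fin.ext
    have h := congrFun (congrArg (fun x => Subtype.val x) he) i
    have := congrArg Fin.val h
    simp only [F] at this
    omega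
  · intro h
    have hle0 : ∀ m : ℕ, ∀ hm : m < n, m ≤ (h.1 ⟨m, hm⟩ : ℕ) := by
      intro m
      induction m with
      | zero => intro hm; exact Nat.zero_le _
      | succ k ih =>
        intro hi
        have hk : k < n := by omega
        have h1 := h.2 (show (⟨k, hk⟩ : Fin n) < ⟨k + 1, hi⟩ by rw [Fin.lt_def]; simp)
        rw [Fin.lt_def] at h1
        have h2 := ih hk
        omega
    have hle : ∀ i : Fin n, (i : ℕ) ≤ (h.1 i : ℕ) := by
      intro i
      have := hle0 i.1 i.2
      simpa using this
    have hchain : ∀ a b : Fin n, a < b →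
        ((a : ℕ) ≤ (b : ℕ) ∧ (h.1 a : ℕ) + ((b : ℕ) - (a : ℕ)) ≤ (h.1 b : ℕ)) := by
      refine fin_rel_of_adj ?_ ?_
      · rintro a b c hab hbc ⟨h1, h2⟩ ⟨h3, h4⟩
        exact ⟨h1.trans h3, by omega⟩
      · intro i hi
        have h1 := h.2 (show (⟨i, Nat.lt_of_succ_lt hi⟩ : Fin n) < ⟨i + 1, hi⟩ by
          rw [Fin.lt_def]; simp)
        rw [Fin.lt_def] at h1
        simp only
        omega
    have hbound : ∀ i : Fin n, (h.1 i : ℕ) < j + ndBelow σ (i : ℕ) := by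
      intro i
      have hn : 0 < n := i.pos
      have hlast : n - 1 < n := by omega
      have h2 : (h.1 ⟨n - 1, hlast⟩ : ℕ) < j + ndBelow σ (n - 1) := (h.1 _).2
      have h3 := ndBelow_le_add σ (show (i : ℕ) ≤ n - 1 by have := i.2; omega)
      rcases eq_or_lt_of_le (show (i : ℕ) ≤ n - 1 by have := i.2; omega) with he | hlt
      · have hi' : (⟨n - 1, hlast⟩ : Fin n) = i := Fin.ext he.symm
        rw [hi'] at h2
        rw [he]
        exact h2
      · have h1 := (hchain i ⟨n - 1, hlast⟩ (by rw [Fin.lt_def]; exact hlt)).2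
        simp only at h1
        omega
    have hnd : ∀ i : Fin n, ndBelow σ (i : ℕ) ≤ (h.1 i : ℕ) :=
      fun i => le_trans (ndBelow_le_self σ _) (hle i)
    refine ⟨⟨fun i => ⟨(h.1 i : ℕ) - ndBelow σ (i : ℕ), by
        have := hbound i; have := hnd i; omega⟩, ?_, ?_⟩, ?_⟩
    · -- monotone
      intro a b hab
      rcases eq_or_lt_of_le hab with rfl | hlt
      · exact le_refl _
      · rw [Fin.le_def]
        show ((h.1 a : ℕ) - ndBelow σ (a : ℕ)) ≤ ((h.1 b : ℕ) - ndBelow σ (b : ℕ))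
        refine fin_rel_of_adj (r := fun a b : Fin n =>
            ((h.1 a : ℕ) - ndBelow σ (a : ℕ)) ≤ ((h.1 b : ℕ) - ndBelow σ (b : ℕ)))
          (fun hab hbc h1 h2 => le_trans h1 h2) ?_ a b hlt
        intro i hi
        have h1 := h.2 (show (⟨i, Nat.lt_of_succ_lt hi⟩ : Fin n) < ⟨i + 1, hi⟩ by
          rw [Fin.lt_def]; simp)
        rw [Fin.lt_def] at h1
        have h2 := ndBelow_succ σ i
        have h3 := hnd ⟨i, Nat.lt_of_succ_lt hi⟩
        simp only [Fin.val_mk] at h3 ⊢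
        by_cases hdes : i ∈ desSet σ <;> simp [hdes] at h2 <;> omega
    · -- strict at descents
      intro i hi hdes
      have h1 := h.2 (show (⟨i, Nat.lt_of_succ_lt hi⟩ : Fin n) < ⟨i + 1, hi⟩ by
        rw [Fin.lt_def]; simp)
      rw [Fin.lt_def] at h1
      have h2 := ndBelow_succ σ i
      have h3 := hnd ⟨i, Nat.lt_of_succ_lt hi⟩
      rw [Fin.lt_def]
      simp only [hdes, if_pos] at h2
      simp only [Fin.val_mk] at h3 ⊢
      omega
    · -- F applied gives back h
      apply Subtype.ext
      funext i
      apply Fin.ext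
      simp only [F]
      have := hnd i
      omega

lemma strictMono_card (n m : ℕ) :
    Nat.card {h : Fin n → Fin m // StrictMono h} = m.choose n := by
  classical
  have e : {h : Fin n → Fin m // StrictMono h} ≃ {s : Finset (Fin m) // s.card = n} := by
    refine ⟨fun h => ⟨Finset.univ.image h.1, ?_⟩,
      fun s => ⟨s.1.orderEmbOfFin s.2, (s.1.orderEmbOfFin s.2).strictMono⟩, ?_, ?_⟩
    · rw [Finset.card_image_of_injective _ h.2.injective, Finset.card_univ, Fintype.card_fin]
    · intro h
      apply Subtype.ext
      exact (Finset.orderEmbOfFin_unique _ (fun i => Finset.mem_image_of_mem _ (mem_univ i))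
        h.2).symm
    · intro s
      apply Subtype.ext
      apply Finset.coe_injective
      rw [Finset.coe_image, Finset.coe_univ, Set.image_univ, Finset.range_orderEmbOfFin]
  rw [Nat.card_congr e, Nat.card_eq_fintype_card, Fintype.card_finset_len, Fintype.card_fin]

/-- Worpitzky's identity. -/
lemma worpitzky (n j : ℕ) :
    j ^ n = ∑ σ : Equiv.Perm (Fin n), (j + (n - 1 - desNum σ)).choose n := by
  classical
  have h0 : (Finset.univ : Finset (Fin n → Fin j)).card = j ^ n := by
    rw [Finset.card_univ, Fintype.card_fun, Fintype.card_fin, Fintype.card_fin]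
  rw [← h0, Finset.card_eq_sum_card_fiberwise
    (f := fun f : Fin n → Fin j => Tuple.sort f) (t := Finset.univ) (fun x _ => mem_univ _)]
  apply Finset.sum_congr rfl
  intro σ _
  have hcard : (Finset.filter (fun f : Fin n → Fin j => Tuple.sort f = σ) Finset.univ).card
      = Nat.card {f : Fin n → Fin j // Tuple.sort f = σ} := by
    rw [Nat.card_eq_fintype_card, Fintype.card_subtype]
  rw [hcard]
  have e1 : {f : Fin n → Fin j // Tuple.sort f = σ} ≃ {g : Fin n → Fin j // Strictified σ g} := by
    refine Equiv.subtypeEquiv (Equiv.arrowCongr σ.symm (Equiv.refl (Fin j))) ?_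
    intro f
    have : (Equiv.arrowCongr σ.symm (Equiv.refl (Fin j))) f = f ∘ σ := by
      funext i
      simp [Equiv.arrowCongr]
    rw [this]
    exact sort_eq_iff_strictified σ f
  rw [Nat.card_congr e1, strictified_card σ, strictMono_card, ndBelow_total σ]

/-- For any positive integer `k`, `t A_{k−1}(t)/(1−t)^k = Σ_{j≥1} j^{k−1} t^j`, i.e.
`t A_{k−1}(t) = (Σ_{j≥1} j^{k−1} t^j) (1−t)^k` as formal power series, where `A_{k-1}` is
the `(k-1)`-st Eulerian polynomial. -/
theorem eulerian_generating_series (k : ℕ) (hk : 0 < k) :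
    ((Polynomial.X * eulerianDes (k - 1) : Polynomial ℚ) : PowerSeries ℚ) =
      PowerSeries.mk (fun j => if j = 0 then 0 else (j : ℚ) ^ (k - 1)) *
        (1 - PowerSeries.X) ^ k := by
  obtain ⟨n, rfl⟩ : ∃ n, k = n + 1 := ⟨k - 1, by omega⟩
  simp only [Nat.add_sub_cancel]
  have h1 : (PowerSeries.mk (fun j => if j = 0 then 0 else (j : ℚ) ^ n) : PowerSeries ℚ) =
      ∑ σ : Equiv.Perm (Fin n),
        (PowerSeries.X : PowerSeries ℚ) ^ (desNum σ + 1) *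
          PowerSeries.mk (fun m => ((n + m).choose n : ℚ)) := by
    ext j
    rw [PowerSeries.coeff_mk, map_sum]
    simp_rw [PowerSeries.coeff_X_pow_mul', PowerSeries.coeff_mk]
    rcases Nat.eq_zero_or_pos j with rfl | hj
    · simp
    · rw [if_neg (by omega)]
      have hwq : (j : ℚ) ^ n = ∑ σ : Equiv.Perm (Fin n),
          ((j + (n - 1 - desNum σ)).choose n : ℚ) := by
        exact_mod_cast congrArg (Nat.cast : ℕ → ℚ) (worpitzky n j)
      rw [hwq]
      apply Finset.sum_congr rfl
      intro σ _
      have hd := desNum_le σ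
      by_cases h : desNum σ + 1 ≤ j
      · have harith : (n + (j - (desNum σ + 1))).choose n = (j + (n - 1 - desNum σ)).choose n := by
          rcases Nat.eq_zero_or_pos n with rfl | hn
          · simp
          · congr 1
            omega
        rw [if_pos h, harith]
      · rw [if_neg h, Nat.choose_eq_zero_of_lt (by omega), Nat.cast_zero]
  rw [h1, Finset.sum_mul]
  have h2 : ∀ σ : Equiv.Perm (Fin n),
      (PowerSeries.X : PowerSeries ℚ) ^ (desNum σ + 1) *
          PowerSeries.mk (fun m => ((n + m).choose n : ℚ)) * (1 - PowerSeries.X) ^ (n + 1) =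
        (PowerSeries.X : PowerSeries ℚ) ^ (desNum σ + 1) := by
    intro σ
    rw [mul_assoc, PowerSeries.mk_add_choose_mul_one_sub_pow_eq_one, mul_one]
  rw [Finset.sum_congr rfl (fun σ _ => h2 σ)]
  rw [eulerianDes, Finset.mul_sum, ← Polynomial.coeToPowerSeries.ringHom_apply, map_sum]
  apply Finset.sum_congr rfl
  intro σ _
  rw [map_mul, map_pow, Polynomial.coeToPowerSeries.ringHom_apply, Polynomial.coe_X,
    pow_succ, mul_comm]
end

section
/- Fix positive integers n, k, d with n = kd, and let τ = γ_n^{-k} where γ_n = (1,2,...,n) is the n-cycle in S_n. Then every σ in the centralizer C_{S_n}(τ) can be written uniquely as σ = τ_1^{e_1}⋯τ_k^{e_k} ρ̂, where τ_i is the d-cycle of τ with support X_i = {j ∈ [n] : j ≡ i mod k}, ρ ∈ S_k, e_1,...,e_k ∈ {0,...,d−1}, and ρ̂ ∈ S_n maps r + qk to ρ(r) + qk for r ∈ [k], 0 ≤ q ≤ d−1. Moreover exc(σ) = d·E_0 + Σ_{i=1}^k e_i, where E_0 is the number of r ∈ [k] with e_r = 0 and r ∈ Exc(ρ). -/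
open Finset Equiv

/-- The permutation of `Fin d × Fin k` sending `(q, r) ↦ (q − e r, ρ r)`. Under the
identification of `j ∈ Fin (d*k)` with `(q, r)` where `j = r + q·k` (so `r = j mod k`),
this is the element `τ₁^{e₁} ⋯ τ_k^{e_k} ρ̂` of the centralizer of `τ = γ_n^{-k}`, where
`τᵢ` is the `d`-cycle of `τ` on the congruence class `{j : j ≡ i mod k}` and
`ρ̂` maps `r + q·k` to `ρ(r) + q·k`. -/
def blockPerm {d k : ℕ} [NeZero d] (e : Fin k → Fin d) (ρ : Equiv.Perm (Fin k)) :
    Equiv.Perm (Fin d × Fin k) where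
  toFun x := (x.1 - e x.2, ρ x.2)
  invFun x := (x.1 + e (ρ⁻¹ x.2), ρ⁻¹ x.2)
  left_inv x := by simp
  right_inv x := by simp

/-- The element `τ₁^{e₁} ⋯ τ_k^{e_k} ρ̂` of `S_n`, `n = d·k`, obtained from `blockPerm`
via the identification `Fin d × Fin k ≃ Fin (d*k)`, `(q, r) ↦ r + q·k`. -/
def Psi {d k : ℕ} [NeZero d] (e : Fin k → Fin d) (ρ : Equiv.Perm (Fin k)) :
    Equiv.Perm (Fin (d * k)) :=
  Equiv.permCongr finProdFinEquiv (blockPerm e ρ)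

open Fin.NatCast Fin.CommRing

lemma finRotate_pow_apply {n : ℕ} [NeZero n] (m : ℕ) (j : Fin n) :
    ((finRotate n) ^ m) j = j + (m : Fin n) := by
  obtain ⟨n, rfl⟩ := Nat.exists_eq_succ_of_ne_zero (NeZero.ne n)
  induction m generalizing j with
  | zero => simp
  | succ m ih =>
    rw [pow_succ', Equiv.Perm.mul_apply, finRotate_succ_apply, ih]
    push_cast
    ring

lemma fin_sub_val {d : ℕ} [NeZero d] (a b : Fin d) :
    ((a - b : Fin d) : ℕ) = if (b : ℕ) ≤ (a : ℕ) then (a : ℕ) - b else (a : ℕ) + d - b := by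
  rw [Fin.sub_def]
  have ha := a.isLt
  have hb := b.isLt
  simp only [Fin.val_mk]
  rcases le_or_gt (b : ℕ) (a : ℕ) with h | h
  · rw [if_pos h]
    have : (d - (b:ℕ)) + a = ((a:ℕ) - b) + d := by omega
    rw [this, Nat.add_mod_right, Nat.mod_eq_of_lt (by omega)]
  · rw [if_neg (by omega), Nat.mod_eq_of_lt (by omega)]
    omega

lemma fin_card_filter_lt {d : ℕ} (c : Fin d) :
    (Finset.univ.filter fun q : Fin d => (q : ℕ) < (c : ℕ)).card = (c : ℕ) := by
  have : (Finset.univ.filter fun q : Fin d => (q : ℕ) < (c : ℕ)) = Finset.Iio c := by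
    ext q
    simp only [mem_filter, mem_univ, true_and, Finset.mem_Iio, Fin.lt_def]
  rw [this, Fin.card_Iio]

section Main
variable {d k : ℕ} [NeZero d] [NeZero k]

lemma F_val (x : Fin d × Fin k) : ((finProdFinEquiv x : Fin (d*k)) : ℕ) = (x.2 : ℕ) + k * x.1 := by
  simp [finProdFinEquiv]

lemma F_add_k (q : Fin d) (r : Fin k) :
    (finProdFinEquiv (q + 1, r) : Fin (d*k)) = finProdFinEquiv (q, r) + (k : Fin (d*k)) := by
  have hd := (NeZero.pos d)
  have hk := (NeZero.pos k)
  apply Fin.ext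
  have hq1 : ((q + 1 : Fin d) : ℕ) = ((q : ℕ) + 1) % d := by
    conv_lhs => rw [← Fin.cast_val_eq_self q]
    have : ((q : ℕ) : Fin d) + 1 = (((q : ℕ) + 1 : ℕ) : Fin d) := by push_cast; ring
    rw [this, Fin.val_natCast]
  rw [Fin.val_add, Fin.val_natCast, F_val, F_val, hq1]
  have hqd := q.isLt
  have hrk := r.isLt
  rcases lt_or_eq_of_le (Nat.succ_le_of_lt hqd) with h | h
  · -- q + 1 < d
    have hd2 : 2 ≤ d := by omega
    have hkdk : k < d * k := by
      have : 2 * k ≤ d * k := Nat.mul_le_mul_right k hd2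
      omega
    rw [Nat.mod_eq_of_lt (by omega), Nat.mod_eq_of_lt hkdk]
    have hlt : (r : ℕ) + k * q + k < d * k := by
      have h1 : (r:ℕ) + k * q + k < k * ((q:ℕ) + 2) := by
        have : k * ((q:ℕ)+2) = k * q + k + k := by ring
        omega
      have h2 : k * ((q:ℕ) + 2) ≤ d * k := by
        rw [mul_comm d k]; exact Nat.mul_le_mul_left k (by omega)
      omega
    rw [Nat.mod_eq_of_lt hlt]
    ring
  · -- q + 1 = d
    have hq1d : (q : ℕ) + 1 = d := by omega
    rw [hq1d, Nat.mod_self, Nat.mul_zero, Nat.add_zero]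
    rcases Nat.lt_or_ge k (d * k) with hkdk | hkdk
    · rw [Nat.mod_eq_of_lt hkdk]
      have : (r : ℕ) + k * q + k = r + d * k := by
        have h2 : k * ((q:ℕ)+1) = k * q + k := by ring
        have h3 : k * ((q:ℕ)+1) = d * k := by rw [hq1d, mul_comm]
        omega
      rw [this, Nat.add_mod_right, Nat.mod_eq_of_lt (by
        have : k ≤ d * k := Nat.le_mul_of_pos_left k hd
        omega)]
    · -- d * k ≤ k, so d = 1, q = 0
      have hd1 : d = 1 := by
        rcases Nat.lt_or_ge d 2 with h' | h'
        · omega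
        · have : 2 * k ≤ d * k := Nat.mul_le_mul_right k h'
          omega
      have hq0 : (q : ℕ) = 0 := by omega
      have hdk : d * k = k := by rw [hd1, one_mul]
      rw [hq0, Nat.mul_zero, Nat.add_zero, hdk, Nat.mod_self, Nat.add_zero,
        Nat.mod_eq_of_lt hrk]

end Main


section Main2
variable {d k : ℕ} [NeZero d] [NeZero k]

lemma blockPerm_apply (e : Fin k → Fin d) (ρ : Equiv.Perm (Fin k)) (x : Fin d × Fin k) :
    blockPerm e ρ x = (x.1 - e x.2, ρ x.2) := rfl

lemma Psi_apply (e : Fin k → Fin d) (ρ : Equiv.Perm (Fin k)) (x : Fin d × Fin k) :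
    Psi e ρ (finProdFinEquiv x) = finProdFinEquiv (blockPerm e ρ x) := by
  simp [Psi]

lemma sigma_coords (σ : Equiv.Perm (Fin (d * k)))
    (hcomm : ∀ j : Fin (d * k), σ (j + (k : Fin (d * k))) = σ j + (k : Fin (d * k)))
    (q : Fin d) (r : Fin k) :
    finProdFinEquiv.symm (σ (finProdFinEquiv (q, r)))
      = ((finProdFinEquiv.symm (σ (finProdFinEquiv ((0 : Fin d), r)))).1 + q,
         (finProdFinEquiv.symm (σ (finProdFinEquiv ((0 : Fin d), r)))).2) := by
  have hstep : ∀ (q : Fin d),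
      finProdFinEquiv.symm (σ (finProdFinEquiv (q + 1, r)))
        = ((finProdFinEquiv.symm (σ (finProdFinEquiv (q, r)))).1 + 1,
           (finProdFinEquiv.symm (σ (finProdFinEquiv (q, r)))).2) := by
    intro q
    rw [F_add_k, hcomm]
    have h1 : σ (finProdFinEquiv (q, r))
        = finProdFinEquiv (finProdFinEquiv.symm (σ (finProdFinEquiv (q, r)))) :=
      (finProdFinEquiv.apply_symm_apply _).symm
    rw [h1, ← F_add_k]
    simp
  have key : ∀ m : ℕ,
      finProdFinEquiv.symm (σ (finProdFinEquiv ((m : Fin d), r)))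
        = ((finProdFinEquiv.symm (σ (finProdFinEquiv ((0 : Fin d), r)))).1 + (m : Fin d),
           (finProdFinEquiv.symm (σ (finProdFinEquiv ((0 : Fin d), r)))).2) := by
    intro m
    induction m with
    | zero => simp
    | succ m ih =>
      have hcast : ((m + 1 : ℕ) : Fin d) = (m : Fin d) + 1 := by push_cast; ring
      rw [hcast, hstep, ih, add_assoc]
  have := key (q : ℕ)
  rwa [Fin.cast_val_eq_self] at this

lemma exists_decomp (σ : Equiv.Perm (Fin (d * k)))
    (hcomm : ∀ j : Fin (d * k), σ (j + (k : Fin (d * k))) = σ j + (k : Fin (d * k))) :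
    ∃ (e : Fin k → Fin d) (ρ : Equiv.Perm (Fin k)), σ = Psi e ρ := by
  classical
  set c : Fin k → Fin d :=
    fun r => (finProdFinEquiv.symm (σ (finProdFinEquiv ((0 : Fin d), r)))).1 with hc
  set ρf : Fin k → Fin k :=
    fun r => (finProdFinEquiv.symm (σ (finProdFinEquiv ((0 : Fin d), r)))).2 with hρf
  have hσ' : ∀ (q : Fin d) (r : Fin k),
      finProdFinEquiv.symm (σ (finProdFinEquiv (q, r))) = (c r + q, ρf r) :=
    fun q r => sigma_coords σ hcomm q r
  have hρinj : Function.Injective ρf := by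
    intro r r' h
    have h1 := hσ' (-(c r)) r
    have h2 := hσ' (-(c r')) r'
    rw [add_neg_cancel] at h1 h2
    have : finProdFinEquiv.symm (σ (finProdFinEquiv (-(c r), r)))
        = finProdFinEquiv.symm (σ (finProdFinEquiv (-(c r'), r'))) := by
      rw [h1, h2, h]
    have h3 : ((-(c r) : Fin d), r) = ((-(c r') : Fin d), r') := by
      have := finProdFinEquiv.injective (σ.injective (finProdFinEquiv.symm.injective this))
      exact this
    exact congrArg Prod.snd h3
  have hρbij := Finite.injective_iff_bijective.mp hρinj
  refine ⟨fun r => -(c r), Equiv.ofBijective ρf hρbij, ?_⟩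
  apply Equiv.ext
  intro j
  obtain ⟨x, rfl⟩ : ∃ x, finProdFinEquiv x = j := ⟨finProdFinEquiv.symm j, finProdFinEquiv.apply_symm_apply j⟩
  obtain ⟨q, r⟩ := x
  rw [Psi_apply, blockPerm_apply]
  have h4 := hσ' q r
  have h5 : σ (finProdFinEquiv (q, r)) = finProdFinEquiv (c r + q, ρf r) := by
    rw [← h4, Equiv.apply_symm_apply]
  rw [h5]
  congr 1
  simp only [Equiv.ofBijective_apply]
  rw [sub_neg_eq_add, add_comm]

end Main2


section Main3
variable {d k : ℕ} [NeZero d] [NeZero k]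

lemma Psi_injective :
    Function.Injective (fun p : (Fin k → Fin d) × Equiv.Perm (Fin k) => Psi p.1 p.2) := by
  rintro ⟨e, ρ⟩ ⟨e', ρ'⟩ h
  simp only at h
  have hb : blockPerm e ρ = blockPerm e' ρ' := (Equiv.permCongr finProdFinEquiv).injective h
  have key : ∀ r : Fin k, ((0 : Fin d) - e r, ρ r) = ((0 : Fin d) - e' r, ρ' r) := by
    intro r
    have h2 := DFunLike.congr_fun hb ((0 : Fin d), r)
    simpa [blockPerm_apply] using h2
  have he : e = e' := by
    funext r
    have := congrArg Prod.fst (key r)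
    simp only [zero_sub, neg_inj] at this
    exact this
  have hρ : ρ = ρ' := by
    apply Equiv.ext
    intro r
    exact congrArg Prod.snd (key r)
  rw [Prod.mk.injEq]
  exact ⟨he, hρ⟩

lemma exc_Psi (e : Fin k → Fin d) (ρ : Equiv.Perm (Fin k)) :
    excNum (Psi e ρ) =
      d * (Finset.univ.filter fun r : Fin k => e r = 0 ∧ (r : ℕ) < (ρ r : ℕ)).card +
        ∑ i, (e i : ℕ) := by
  classical
  have h1 : excNum (Psi e ρ)
      = ∑ x : Fin d × Fin k,
          if ((finProdFinEquiv x : ℕ) < ((Psi e ρ) (finProdFinEquiv x) : ℕ)) then 1 else 0 := by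
    rw [excNum, Finset.card_filter]
    exact (Equiv.sum_comp finProdFinEquiv
      fun j => if (j : ℕ) < ((Psi e ρ) j : ℕ) then 1 else 0).symm
  have h2 : ∀ x : Fin d × Fin k,
      (if ((finProdFinEquiv x : ℕ) < ((Psi e ρ) (finProdFinEquiv x) : ℕ)) then (1:ℕ) else 0)
      = if ((x.2 : ℕ) + k * x.1 < (ρ x.2 : ℕ) + k * ((x.1 - e x.2 : Fin d) : ℕ)) then (1:ℕ)
        else 0 := by
    intro x
    rw [Psi_apply, blockPerm_apply, F_val, F_val]
  rw [h1]
  simp only [h2]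
  rw [Fintype.sum_prod_type, Finset.sum_comm]
  have inner : ∀ r : Fin k,
      (∑ q : Fin d, if ((r : ℕ) + k * q < (ρ r : ℕ) + k * ((q - e r : Fin d) : ℕ)) then (1:ℕ)
          else 0)
      = d * (if e r = 0 ∧ (r : ℕ) < (ρ r : ℕ) then 1 else 0) + (e r : ℕ) := by
    intro r
    by_cases h0 : e r = 0
    · simp only [h0, sub_zero, Fin.val_zero, add_zero, true_and, add_lt_add_iff_right]
      by_cases hlt : (r : ℕ) < (ρ r : ℕ)
      · simp [hlt, Finset.sum_const, Finset.card_univ]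
      · simp [hlt]
    · have hb0 : 0 < (e r : ℕ) := by
        rcases Nat.eq_zero_or_pos (e r : ℕ) with h | h
        · exact absurd (Fin.ext (by simpa using h)) h0
        · exact h
      have hbd := (e r).isLt
      have hrk := r.isLt
      have hρk := (ρ r).isLt
      have hcond : ∀ q : Fin d,
          (((r : ℕ) + k * q < (ρ r : ℕ) + k * ((q - e r : Fin d) : ℕ)) ↔ (q : ℕ) < (e r : ℕ)) := by
        intro q
        rw [fin_sub_val]
        have hq := q.isLt
        rcases le_or_gt ((e r : ℕ)) (q : ℕ) with h | h
        · rw [if_pos h]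
          constructor
          · intro hcc
            exfalso
            have hA : k * ((q : ℕ) - e r) + k ≤ k * q := by
              calc k * ((q : ℕ) - e r) + k = k * (((q : ℕ) - e r) + 1) := by ring
                _ ≤ k * q := Nat.mul_le_mul_left k (by omega)
            linarith
          · intro hq'
            omega
        · rw [if_neg (by omega)]
          have hA : k * (q : ℕ) + k ≤ k * ((q : ℕ) + d - e r) := by
            calc k * (q : ℕ) + k = k * ((q : ℕ) + 1) := by ring
              _ ≤ k * ((q : ℕ) + d - e r) := Nat.mul_le_mul_left k (by omega)
          constructor
          · intro _
            exact h
          · intro _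
            linarith
      simp only [hcond]
      rw [Finset.sum_boole]
      simp only [Nat.cast_id, fin_card_filter_lt]
      simp [h0]
  rw [Finset.sum_congr rfl (fun r _ => inner r), Finset.sum_add_distrib, ← Finset.mul_sum,
    ← Finset.card_filter]

end Main3

/-- Canonical form of elements of the centralizer of `τ = γ_n^{-k}` in `S_n`, `n = k·d`:
every `σ` commuting with `τ` can be written uniquely as `σ = τ₁^{e₁} ⋯ τ_k^{e_k} ρ̂`
with `ρ ∈ S_k` and `e₁, …, e_k ∈ {0, …, d−1}`; moreover for this decomposition
`exc(σ) = d·E₀ + Σᵢ eᵢ`, where `E₀ = #{r : e_r = 0 and r ∈ Exc(ρ)}`. -/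
theorem centralizer_decomposition_exc (d k : ℕ) [NeZero d] [NeZero k]
    (σ : Equiv.Perm (Fin (d * k)))
    (hσ : σ * (finRotate (d * k) ^ k)⁻¹ = (finRotate (d * k) ^ k)⁻¹ * σ) :
    (∃! p : (Fin k → Fin d) × Equiv.Perm (Fin k), σ = Psi p.1 p.2) ∧
    ∀ (e : Fin k → Fin d) (ρ : Equiv.Perm (Fin k)), σ = Psi e ρ →
      excNum σ =
        d * (Finset.univ.filter fun r : Fin k => e r = 0 ∧ (r : ℕ) < (ρ r : ℕ)).card +
          ∑ i, (e i : ℕ) := by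
  haveI : NeZero (d * k) := ⟨Nat.mul_ne_zero (NeZero.ne d) (NeZero.ne k)⟩
  have h1 : finRotate (d * k) ^ k * σ = σ * finRotate (d * k) ^ k := by
    have h := congrArg
      (fun x => (finRotate (d * k) ^ k) * x * (finRotate (d * k) ^ k)) hσ
    simpa [mul_assoc] using h
  have hcomm : ∀ j : Fin (d * k), σ (j + (k : Fin (d * k))) = σ j + (k : Fin (d * k)) := by
    intro j
    have h2 := DFunLike.congr_fun h1 j
    simp only [Equiv.Perm.mul_apply] at h2
    rw [finRotate_pow_apply, finRotate_pow_apply] at h2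
    exact h2.symm
  obtain ⟨e₀, ρ₀, he₀⟩ := exists_decomp σ hcomm
  constructor
  · refine ⟨(e₀, ρ₀), he₀, ?_⟩
    rintro ⟨e', ρ'⟩ h'
    exact Psi_injective (h'.symm.trans he₀)
  · intro e ρ h
    rw [h]
    exact exc_Psi e ρ
end

section
/- Let n = dk and suppose σ ∈ C_{S_n}(γ_n^k) has the property that Φ(σ) ∈ S_k is a k-cycle. Write σ = τ_1^{e_1}⋯τ_k^{e_k} ρ̂ as in the canonical decomposition. Then all cycles of σ have the same length sk, where s is the order of k·(e_1 + ⋯ + e_k) in ℤ/nℤ. -/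
open Finset Equiv

section auxlemmas

variable {d k : ℕ} [NeZero d] [NeZero k]

lemma blockPerm_iterate (e : Fin k → Fin d) (ρ : Equiv.Perm (Fin k)) (m : ℕ)
    (q : Fin d) (r : Fin k) :
    (⇑(blockPerm e ρ))^[m] (q, r) =
      (q - ∑ j ∈ Finset.range m, e ((ρ ^ j) r), (ρ ^ m) r) := by
  induction m with
  | zero => simp
  | succ m ih =>
    rw [Function.iterate_succ_apply', ih]
    simp [blockPerm, Finset.sum_range_succ, pow_succ', sub_sub, Equiv.Perm.mul_apply]

lemma val_sum_range (f : ℕ → Fin d) (m : ℕ) :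
    ((∑ j ∈ Finset.range m, f j : Fin d) : ℕ) = (∑ j ∈ Finset.range m, ((f j : ℕ))) % d := by
  induction m with
  | zero => simp
  | succ m ih =>
    rw [Finset.sum_range_succ, Finset.sum_range_succ, Fin.val_add, ih, Nat.mod_add_mod]

omit [NeZero d] in
lemma minimalPeriod_rho (ρ : Equiv.Perm (Fin k))
    (hρ : ∀ x y : Fin k, ∃ m : ℕ, (ρ ^ m) x = y) (r : Fin k) :
    Function.minimalPeriod (⇑ρ) r = k := by
  set p := Function.minimalPeriod (⇑ρ) r with hp
  have hper : Function.IsPeriodicPt (⇑ρ) (orderOf ρ) r := by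
    show (⇑ρ)^[orderOf ρ] r = r
    rw [Equiv.Perm.iterate_eq_pow, pow_orderOf_eq_one]; rfl
  have hppos : 0 < p := hper.minimalPeriod_pos (orderOf_pos ρ)
  have hinj : Function.Injective (fun j : Fin p => (⇑ρ)^[(j : ℕ)] r) := by
    intro j₁ j₂ h
    exact Fin.ext (Function.iterate_injOn_Iio_minimalPeriod j₁.2 j₂.2 h)
  have hsurj : Function.Surjective (fun j : Fin p => (⇑ρ)^[(j : ℕ)] r) := by
    intro y
    obtain ⟨m, hm⟩ := hρ r y
    refine ⟨⟨m % p, Nat.mod_lt _ hppos⟩, ?_⟩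
    show (⇑ρ)^[m % p] r = y
    rw [hp, Function.iterate_mod_minimalPeriod_eq, Equiv.Perm.iterate_eq_pow, hm]
  have h1 : p ≤ k := by
    simpa using Fintype.card_le_of_injective _ hinj
  have h2 : k ≤ p := by
    simpa using Fintype.card_le_of_surjective _ hsurj
  omega

lemma sum_one_period (e : Fin k → Fin d) (ρ : Equiv.Perm (Fin k))
    (hρ : ∀ x y : Fin k, ∃ m : ℕ, (ρ ^ m) x = y) (r : Fin k) :
    ∑ j ∈ Finset.range k, ((e ((ρ ^ j) r)) : ℕ) = ∑ i, ((e i) : ℕ) := by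
  have hmp := minimalPeriod_rho ρ hρ r
  have hinj : Function.Injective (fun j : Fin k => (ρ ^ (j : ℕ)) r) := by
    intro j₁ j₂ h
    refine Fin.ext (Function.iterate_injOn_Iio_minimalPeriod (f := ⇑ρ) (x := r) ?_ ?_ ?_)
    · rw [hmp]; exact j₁.2
    · rw [hmp]; exact j₂.2
    · simpa [Equiv.Perm.iterate_eq_pow] using h
  have hbij : Function.Bijective (fun j : Fin k => (ρ ^ (j : ℕ)) r) :=
    Finite.injective_iff_bijective.mp hinj
  rw [← Fin.sum_univ_eq_sum_range]
  exact Fintype.sum_bijective _ hbij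
    (fun j : Fin k => ((e ((ρ ^ (j : ℕ)) r) : ℕ))) (fun i => ((e i : ℕ))) (fun j => rfl)

lemma rho_pow_mul_k (ρ : Equiv.Perm (Fin k))
    (hρ : ∀ x y : Fin k, ∃ m : ℕ, (ρ ^ m) x = y) (r : Fin k) (s : ℕ) :
    (ρ ^ (s * k)) r = r := by
  have hk : Function.IsPeriodicPt (⇑ρ) k r := by
    have h := Function.isPeriodicPt_minimalPeriod (⇑ρ) r
    rwa [minimalPeriod_rho ρ hρ r] at h
  show (⇑ρ)^[s * k] r = r
  rw [mul_comm]
  exact hk.mul_const s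

lemma sum_many_periods (e : Fin k → Fin d) (ρ : Equiv.Perm (Fin k))
    (hρ : ∀ x y : Fin k, ∃ m : ℕ, (ρ ^ m) x = y) (r : Fin k) (s : ℕ) :
    ∑ j ∈ Finset.range (s * k), ((e ((ρ ^ j) r)) : ℕ) = s * ∑ i, ((e i) : ℕ) := by
  induction s with
  | zero => simp
  | succ s ih =>
    have hshift : ∀ j : ℕ, ((ρ ^ (s * k + j)) r) = (ρ ^ j) r := by
      intro j
      rw [add_comm, pow_add, Equiv.Perm.mul_apply, rho_pow_mul_k ρ hρ r s]
    rw [add_mul, one_mul, Finset.sum_range_add, ih]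
    simp only [hshift]
    rw [sum_one_period e ρ hρ r]
    ring

end auxlemmas

/-- Let `n = d·k` and let `σ = τ₁^{e₁} ⋯ τ_k^{e_k} ρ̂` be an element of the centralizer of
`γ_n^k` (in canonical form), with `Φ(σ) = ρ` a `k`-cycle.  Then all cycles of `σ` have the
same length `s·k`, where `s` is the additive order of `k·(e₁ + ⋯ + e_k)` in `ℤ/nℤ`:
the cycle of `σ` through any point has length `s·k`. -/
theorem cycles_of_kcycle_centralizer_element (d k : ℕ) [NeZero d] [NeZero k]
    (e : Fin k → Fin d) (ρ : Equiv.Perm (Fin k))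
    (hρ : ∀ x y : Fin k, ∃ m : ℕ, (ρ ^ m) x = y) :
    ∀ x : Fin (d * k),
      Function.minimalPeriod (⇑(Psi e ρ)) x =
        addOrderOf ((↑(k * ∑ i, (e i : ℕ)) : ZMod (d * k))) * k := by
  intro x
  have hk0 : 0 < k := Nat.pos_of_ne_zero (NeZero.ne k)
  rcases hqr : finProdFinEquiv.symm x with ⟨q, r⟩
  have hx : x = finProdFinEquiv (q, r) := by rw [← hqr, Equiv.apply_symm_apply]
  set t := addOrderOf ((↑(k * ∑ i, (e i : ℕ)) : ZMod (d * k))) with ht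
  -- conjugation: iterates of Psi correspond to iterates of blockPerm
  have hconj : ∀ (m : ℕ) (z : Fin d × Fin k),
      (⇑(Psi e ρ))^[m] (finProdFinEquiv z) = finProdFinEquiv ((⇑(blockPerm e ρ))^[m] z) := by
    intro m
    induction m with
    | zero => intro z; simp
    | succ m ih =>
      intro z
      rw [Function.iterate_succ_apply, Function.iterate_succ_apply,
        show (⇑(Psi e ρ)) (finProdFinEquiv z) = finProdFinEquiv ((blockPerm e ρ) z) by
          simp [Psi], ih]
  have hiff : ∀ n, Function.IsPeriodicPt (⇑(Psi e ρ)) n x ↔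
      Function.IsPeriodicPt (⇑(blockPerm e ρ)) n (q, r) := by
    intro n
    rw [Function.IsPeriodicPt, Function.IsPeriodicPt, Function.IsFixedPt, Function.IsFixedPt,
      hx, hconj n (q, r), Equiv.apply_eq_iff_eq]
  have hmp_eq : Function.minimalPeriod (⇑(Psi e ρ)) x
      = Function.minimalPeriod (⇑(blockPerm e ρ)) (q, r) :=
    Nat.dvd_antisymm
      (((hiff _).mpr (Function.isPeriodicPt_minimalPeriod _ _)).minimalPeriod_dvd)
      (((hiff _).mp (Function.isPeriodicPt_minimalPeriod _ _)).minimalPeriod_dvd)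
  -- key characterization
  have key : ∀ m : ℕ, Function.IsPeriodicPt (⇑(blockPerm e ρ)) m (q, r) ↔ t * k ∣ m := by
    intro m
    rw [Function.IsPeriodicPt, Function.IsFixedPt, blockPerm_iterate, Prod.mk.injEq]
    constructor
    · rintro ⟨h1, h2⟩
      have hkm : k ∣ m := by
        have hper : Function.IsPeriodicPt (⇑ρ) m r := h2
        have := hper.minimalPeriod_dvd
        rwa [minimalPeriod_rho ρ hρ r] at this
      set s := m / k with hs
      have hsk : s * k = m := Nat.div_mul_cancel hkm
      have hS : (∑ j ∈ Finset.range m, ((e ((ρ ^ j) r)) : ℕ)) % d = 0 := by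
        rw [← val_sum_range, sub_eq_self.mp h1, Fin.val_zero]
      have hd : d ∣ s * ∑ i, ((e i : ℕ)) := by
        rw [← sum_many_periods e ρ hρ r s, hsk]
        exact Nat.dvd_of_mod_eq_zero hS
      have hsmul : s • ((↑(k * ∑ i, (e i : ℕ)) : ZMod (d * k))) = 0 := by
        rw [nsmul_eq_mul]
        rw [show ((s : ZMod (d*k)) * (↑(k * ∑ i, (e i : ℕ)))) = ((s * (k * ∑ i, (e i : ℕ)) : ℕ) : ZMod (d*k)) by push_cast; ring]
        rw [ZMod.natCast_eq_zero_iff]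
        rw [show s * (k * ∑ i, (e i : ℕ)) = (s * ∑ i, (e i : ℕ)) * k by ring]
        exact mul_dvd_mul hd dvd_rfl
      have hts : t ∣ s := addOrderOf_dvd_iff_nsmul_eq_zero.mpr hsmul
      rw [← hsk]
      exact mul_dvd_mul hts dvd_rfl
    · intro hm
      have hkm : k ∣ m := dvd_trans (dvd_mul_left k t) hm
      set s := m / k with hs
      have hsk : s * k = m := Nat.div_mul_cancel hkm
      have hts : t ∣ s := by
        rw [hs, Nat.dvd_div_iff_mul_dvd hkm, mul_comm]
        exact hm
      have hsmul : s • ((↑(k * ∑ i, (e i : ℕ)) : ZMod (d * k))) = 0 :=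
        addOrderOf_dvd_iff_nsmul_eq_zero.mp hts
      have hdvd : d * k ∣ s * (k * ∑ i, (e i : ℕ)) := by
        rw [← ZMod.natCast_eq_zero_iff]
        rw [show ((s * (k * ∑ i, (e i : ℕ)) : ℕ) : ZMod (d*k)) = (s : ZMod (d*k)) * (↑(k * ∑ i, (e i : ℕ))) by push_cast; ring]
        rw [← nsmul_eq_mul] at *
        exact hsmul
      have hd : d ∣ s * ∑ i, ((e i : ℕ)) := by
        have h' : d * k ∣ (s * ∑ i, (e i : ℕ)) * k := by
          rwa [show s * (k * ∑ i, (e i : ℕ)) = (s * ∑ i, (e i : ℕ)) * k by ring] at hdvd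
        exact (Nat.mul_dvd_mul_iff_right hk0).mp h'
      constructor
      · rw [sub_eq_self]
        apply Fin.ext
        rw [val_sum_range, Fin.val_zero, ← hsk, sum_many_periods e ρ hρ r s]
        obtain ⟨c, hc⟩ := hd
        rw [hc, Nat.mul_mod_right]
      · rw [← hsk]
        exact rho_pow_mul_k ρ hρ r s
  rw [hmp_eq]
  exact Nat.dvd_antisymm
    (((key _).mpr dvd_rfl).minimalPeriod_dvd)
    ((key _).mp (Function.isPeriodicPt_minimalPeriod _ _))
end

section
/- Let n = dk and suppose σ ∈ C_{S_n}(γ_n^k) with Φ(σ) a k-cycle, and suppose all cycles of σ have length r (so σ has cycle type r^{n/r} and k | r | n). Then gcd(exc(σ), d) = n/r. -/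
open Finset Equiv

/-- The permutation `Φ(σ)` of the congruence classes mod `k` induced by an element `σ` of
the centralizer of `γ_n^k` (`n = d·k`): the class of `j` is `j mod k`, and `Φ(σ)` sends
the class `r` to the class of `σ(r)`.  (For arbitrary `σ` this is just a function on
classes; for `σ` in the centralizer it is the induced permutation.) -/
def phiFun {d k : ℕ} [NeZero d] [NeZero k] (σ : Equiv.Perm (Fin (d * k))) (r : Fin k) :
    Fin k :=
  ⟨(σ ⟨(r : ℕ), lt_of_lt_of_le r.2 (Nat.le_mul_of_pos_left k
      (Nat.pos_of_ne_zero (NeZero.ne d)))⟩ : ℕ) % k,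
    Nat.mod_lt _ (Nat.pos_of_ne_zero (NeZero.ne k))⟩

lemma finRotate_pow_val {n : ℕ} (hn : 0 < n) (m : ℕ) (x : Fin n) :
    (((finRotate n ^ m) x : Fin n) : ℕ) = ((x : ℕ) + m) % n := by
  obtain ⟨n', rfl⟩ : ∃ n', n = n' + 1 := ⟨n - 1, by omega⟩
  induction m with
  | zero => simp [Nat.mod_eq_of_lt x.2]
  | succ m ih =>
    rw [pow_succ', Equiv.Perm.mul_apply, finRotate_succ_apply, Fin.add_def, ih, Fin.val_one']
    conv_rhs => rw [show (x:ℕ) + (m+1) = ((x:ℕ) + m) + 1 by ring, Nat.add_mod]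

lemma reach_aux {d k : ℕ} (hd : 0 < d) (hk : 0 < k) (x y : Fin (d*k))
    (h : (x:ℕ) % k = (y:ℕ) % k) : ∃ t, (((finRotate (d*k) ^ k) ^ t) x) = y := by
  have hn : 0 < d * k := Nat.mul_pos hd hk
  refine ⟨((y:ℕ) + d*k - (x:ℕ)) / k, ?_⟩
  have hdvd : k ∣ ((y:ℕ) + d*k - (x:ℕ)) := by
    apply Nat.dvd_of_mod_eq_zero
    apply Nat.sub_mod_eq_zero_of_mod_eq
    rw [Nat.add_mul_mod_self_right, ← h]
  apply Fin.ext
  rw [← pow_mul, finRotate_pow_val hn, Nat.mul_div_cancel' hdvd]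
  have hx : (x:ℕ) < d*k := x.2
  rw [show (x:ℕ) + ((y:ℕ) + d*k - (x:ℕ)) = (y:ℕ) + d*k by omega, Nat.add_mod_right]
  exact Nat.mod_eq_of_lt y.2

/-- Let `n = d·k` and let `σ` be an element of the centralizer of `γ_n^k` in `S_n` whose
induced permutation `Φ(σ)` of the congruence classes mod `k` is a `k`-cycle, and suppose
all cycles of `σ` have length `r` (so `σ` has cycle type `r^{n/r}`).  Then
`gcd(exc(σ), d) = n/r`. -/
theorem gcd_exc_eq (d k r : ℕ) [NeZero d] [NeZero k]
    (σ : Equiv.Perm (Fin (d * k)))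
    (hσ : σ ∈ Subgroup.centralizer {finRotate (d * k) ^ k})
    (hΦ : ∀ x y : Fin k, ∃ m : ℕ, (phiFun σ)^[m] x = y)
    (hr : ∀ x : Fin (d * k), Function.minimalPeriod (⇑σ) x = r) :
    Nat.gcd (excNum σ) d = d * k / r := by
  have hd : 0 < d := Nat.pos_of_ne_zero (NeZero.ne d)
  have hk : 0 < k := Nat.pos_of_ne_zero (NeZero.ne k)
  have hn : 0 < d * k := Nat.mul_pos hd hk
  haveI : NeZero (d * k) := ⟨hn.ne'⟩
  set c : Equiv.Perm (Fin (d*k)) := finRotate (d*k) ^ k with hcdef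
  have hcval : ∀ x : Fin (d*k), ((c x : Fin (d*k)) : ℕ) = ((x:ℕ) + k) % (d*k) :=
    fun x => finRotate_pow_val hn k x
  have hcomm : ∀ x, σ (c x) = c (σ x) := by
    have h := Subgroup.mem_centralizer_iff.mp hσ c rfl
    intro x
    calc σ (c x) = (σ * c) x := rfl
    _ = (c * σ) x := by rw [h]
    _ = c (σ x) := rfl
  have hcommt : ∀ (t : ℕ) (x), σ ((c ^ t) x) = (c ^ t) (σ x) := by
    intro t
    induction t with
    | zero => intro x; rfl
    | succ t ih =>
      intro x
      rw [pow_succ, Equiv.Perm.mul_apply, Equiv.Perm.mul_apply, ih, hcomm]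
  -- cast to ZMod
  set ι : Fin (d*k) → ZMod (d*k) := fun x => ((x : ℕ) : ZMod (d*k)) with hιdef
  have ι_inj : Function.Injective ι := by
    intro x y hxy
    apply Fin.ext
    rw [← ZMod.val_cast_of_lt x.2, ← ZMod.val_cast_of_lt y.2]
    exact congrArg ZMod.val hxy
  have ιc : ∀ x, ι (c x) = ι x + (k : ZMod (d*k)) := by
    intro x
    show (((c x : Fin _):ℕ) : ZMod (d*k)) = _
    rw [hcval, ZMod.natCast_mod, Nat.cast_add]
  set μ : Fin (d*k) → ZMod (d*k) := fun x => ι (σ x) - ι x with hμdef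
  have hσμ : ∀ x, ι (σ x) = ι x + μ x := fun x => by rw [hμdef]; ring
  have hμc : ∀ x, μ (c x) = μ x := by
    intro x
    show ι (σ (c x)) - ι (c x) = ι (σ x) - ι x
    rw [hcomm, ιc, ιc]; ring
  have hμct : ∀ (t : ℕ) (x), μ ((c ^ t) x) = μ x := by
    intro t
    induction t with
    | zero => intro x; rfl
    | succ t ih =>
      intro x
      rw [pow_succ, Equiv.Perm.mul_apply, ih, hμc]
  have hμclass : ∀ x y : Fin (d*k), (x:ℕ) % k = (y:ℕ) % k → μ x = μ y := by
    intro x y h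
    obtain ⟨t, ht⟩ := reach_aux hd hk x y h
    rw [← ht, hμct]
  have hkn : k ≤ d * k := Nat.le_mul_of_pos_left k hd
  set emb : Fin k → Fin (d*k) := fun j => ⟨(j:ℕ), lt_of_lt_of_le j.2 hkn⟩ with hembdef
  set cls : Fin (d*k) → Fin k := fun x => ⟨(x:ℕ) % k, Nat.mod_lt _ hk⟩ with hclsdef
  set f : Fin k → Fin k := phiFun σ with hfdef
  have hfval : ∀ j : Fin k, ((f j : Fin k) : ℕ) = ((σ (emb j) : Fin (d*k)) : ℕ) % k :=
    fun j => rfl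
  have hmodk : ∀ (a t : ℕ), ((a + k*t) % (d*k)) % k = a % k := by
    intro a t
    rw [Nat.mod_mod_of_dvd _ (dvd_mul_left k d), Nat.add_mul_mod_self_left]
  have hctval : ∀ (t : ℕ) (y : Fin (d*k)), (((c^t) y : Fin (d*k)) : ℕ) = ((y:ℕ) + k*t) % (d*k) := by
    intro t y
    rw [hcdef, ← pow_mul]
    exact finRotate_pow_val hn (k*t) y
  have hrep : ∀ x : Fin (d*k), cls (σ x) = f (cls x) := by
    intro x
    obtain ⟨t, ht⟩ := reach_aux hd hk (emb (cls x)) x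
      (by show ((x:ℕ) % k) % k = (x:ℕ) % k; exact Nat.mod_mod_of_dvd _ dvd_rfl)
    rw [← hcdef] at ht
    have hx : σ x = (c^t) (σ (emb (cls x))) := by rw [← hcommt, ht]
    apply Fin.ext
    show ((σ x : Fin (d*k)) : ℕ) % k = ((f (cls x) : Fin k) : ℕ)
    rw [hx, hctval, hmodk, hfval]
  have hclst : ∀ (t:ℕ) (x), cls (σ^[t] x) = f^[t] (cls x) := by
    intro t
    induction t with
    | zero => intro x; rfl
    | succ t ih =>
      intro x
      rw [Function.iterate_succ_apply', Function.iterate_succ_apply', hrep, ih]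
  have hfinj : Function.Injective f := by
    intro j1 j2 h
    have hsame : ((σ (emb j1) : Fin (d*k)):ℕ) % k = ((σ (emb j2) : Fin (d*k)):ℕ) % k := by
      rw [← hfval, ← hfval, h]
    obtain ⟨t, ht⟩ := reach_aux hd hk (σ (emb j1)) (σ (emb j2)) hsame
    rw [← hcdef] at ht
    have h2 : (c^t) (emb j1) = emb j2 := σ.injective (by rw [hcommt]; exact ht)
    have h3 := congrArg (fun z : Fin (d*k) => ((z : Fin (d*k)):ℕ) % k) h2
    simp only [hctval] at h3
    rw [hmodk] at h3
    apply Fin.ext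
    rw [← Nat.mod_eq_of_lt j1.2, ← Nat.mod_eq_of_lt j2.2]
    exact h3
  have hfbij : Function.Bijective f := Finite.injective_iff_bijective.mp hfinj
  have hper : ∀ z : Fin k, z ∈ Function.periodicPts f := by
    intro z
    set ef : Equiv.Perm (Fin k) := Equiv.ofBijective f hfbij with hefdef
    refine ⟨orderOf ef, orderOf_pos ef, ?_⟩
    show f^[orderOf ef] z = z
    have hcoe : f = ⇑ef := rfl
    rw [hcoe, Equiv.Perm.iterate_eq_pow, pow_orderOf_eq_one]
    rfl
  set z0 : Fin k := cls 0 with hz0def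
  have hppos : 0 < Function.minimalPeriod f z0 :=
    Function.minimalPeriod_pos_of_mem_periodicPts (hper z0)
  have hpk : Function.minimalPeriod f z0 = k := by
    apply le_antisymm
    · have h1 := Finset.card_le_card_of_injOn (fun t => f^[t] z0)
        (fun a _ => Finset.mem_univ (f^[a] z0))
        (s := Finset.range (Function.minimalPeriod f z0))
        (by rw [Finset.coe_range]; exact Function.iterate_injOn_Iio_minimalPeriod)
      simpa using h1
    · have h2 := Finset.card_le_card_of_surjOn (s := Finset.range (Function.minimalPeriod f z0))
        (t := Finset.univ) (fun t => f^[t] z0)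
        (by
          intro y _
          obtain ⟨m, hm⟩ := hΦ z0 y
          refine (Set.mem_image _ _ _).mpr ⟨m % Function.minimalPeriod f z0, ?_, ?_⟩
          · simp [Nat.mod_lt _ hppos]
          · rw [Function.iterate_mod_minimalPeriod_eq, hm])
      simpa using h2
  have hdist : ∀ t1 t2 : ℕ, t1 < k → t2 < k → f^[t1] z0 = f^[t2] z0 → t1 = t2 := by
    intro t1 t2 h1 h2 h
    exact Function.iterate_injOn_Iio_minimalPeriod (by rw [hpk]; exact h1)
      (by rw [hpk]; exact h2) h
  have hfk : f^[k] z0 = z0 := by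
    have h := Function.iterate_minimalPeriod (f := f) (x := z0)
    rwa [hpk] at h
  have htraj : ∀ (m:ℕ) (x : Fin (d*k)), ι (σ^[m] x) = ι x + ∑ t ∈ Finset.range m, μ (σ^[t] x) := by
    intro m x
    induction m with
    | zero => simp
    | succ m ih =>
      rw [Function.iterate_succ_apply', hσμ, ih, Finset.sum_range_succ]
      ring
  set S : ZMod (d*k) := ∑ j : Fin k, μ (emb j) with hSdef
  have hμcls : ∀ x : Fin (d*k), μ x = μ (emb (cls x)) := by
    intro x
    exact hμclass x (emb (cls x)) (Nat.mod_mod_of_dvd _ dvd_rfl).symm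
  have hstep : ∀ y : Fin (d*k), cls y = z0 → ι (σ^[k] y) = ι y + S := by
    intro y hy
    rw [htraj k y]
    congr 1
    have hb : Function.Bijective (fun t : Fin k => f^[(t:ℕ)] z0) :=
      Finite.injective_iff_bijective.mp (fun t1 t2 h => Fin.ext (hdist _ _ t1.2 t2.2 h))
    calc ∑ t ∈ Finset.range k, μ (σ^[t] y)
        = ∑ t : Fin k, μ (emb (f^[(t:ℕ)] z0)) := by
          rw [Finset.sum_range]
          refine Finset.sum_congr rfl (fun t _ => ?_)
          rw [hμcls (σ^[(t:ℕ)] y), hclst, hy]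
      _ = ∑ j : Fin k, μ (emb j) :=
          Equiv.sum_comp (Equiv.ofBijective _ hb) (fun j => μ (emb j))
  have hι0 : ι 0 = 0 := by simp [hιdef]
  have hkm : ∀ m : ℕ, ι (σ^[k*m] (0 : Fin (d*k))) = m • S ∧ cls (σ^[k*m] (0:Fin (d*k))) = z0 := by
    intro m
    induction m with
    | zero => exact ⟨by simpa using hι0, rfl⟩
    | succ m ih =>
      have e1 : (⇑σ)^[k*(m+1)] (0:Fin (d*k)) = (⇑σ)^[k] ((⇑σ)^[k*m] 0) := by
        rw [show k*(m+1) = k + k*m by ring, Function.iterate_add_apply]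
      constructor
      · rw [e1, hstep _ ih.2, ih.1, succ_nsmul]
      · rw [e1, hclst, ih.2, hfk]
  set o := addOrderOf S with hodef
  have hopos : 0 < o := addOrderOf_pos S
  have hko0 : (⇑σ)^[k*o] (0 : Fin (d*k)) = 0 := by
    apply ι_inj
    rw [(hkm o).1, hι0, hodef, addOrderOf_nsmul_eq_zero S]
  have hrdvd : r ∣ k*o := by
    rw [← hr 0]
    exact Function.IsPeriodicPt.minimalPeriod_dvd hko0
  have hkr : k ∣ r := by
    have h0 : (⇑σ)^[r] (0 : Fin (d*k)) = 0 := by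
      have h := Function.iterate_minimalPeriod (f := ⇑σ) (x := (0:Fin (d*k)))
      rwa [hr 0] at h
    have hcls0 : f^[r] z0 = z0 := by rw [hz0def, ← hclst, h0]
    have hmod : f^[r % k] z0 = f^[r] z0 := Function.IsPeriodicPt.iterate_mod_apply hfk r
    have := hdist (r % k) 0 (Nat.mod_lt _ hk) hk (by rw [hmod, hcls0]; rfl)
    exact Nat.dvd_of_mod_eq_zero this
  obtain ⟨m, hrm⟩ := hkr
  have hmo : o ∣ m := by
    have h0 : (⇑σ)^[k*m] (0 : Fin (d*k)) = 0 := by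
      have h := Function.iterate_minimalPeriod (f := ⇑σ) (x := (0:Fin (d*k)))
      rwa [hr 0, hrm] at h
    apply addOrderOf_dvd_of_nsmul_eq_zero
    rw [← (hkm m).1, h0, hι0]
  have hreq : r = k * o := by
    refine Nat.dvd_antisymm hrdvd ?_
    rw [hrm]
    exact Nat.mul_dvd_mul_left k hmo
  have hoval : o = (d*k) / Nat.gcd (d*k) S.val := by
    rw [hodef]
    conv_lhs => rw [← ZMod.natCast_zmod_val S]
    exact ZMod.addOrderOf_coe _ hn.ne'
  have hkS : k ∣ S.val := by
    have hcast : ((S.val : ℕ) : ZMod k) = 0 := by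
      have h1 : ((S.val : ℕ) : ZMod k) = ZMod.castHom (dvd_mul_left k d) (ZMod k) S := by
        rw [ZMod.castHom_apply, ← ZMod.natCast_val]
      rw [h1, hSdef, map_sum]
      have hterm : ∀ j : Fin k, ZMod.castHom (dvd_mul_left k d) (ZMod k) (μ (emb j))
          = (((f j : Fin k) : ℕ) : ZMod k) - ((j : ℕ) : ZMod k) := by
        intro j
        show ZMod.castHom (dvd_mul_left k d) (ZMod k)
            ((((σ (emb j) : Fin (d*k)) : ℕ) : ZMod (d*k)) - (((emb j : Fin (d*k)) : ℕ) : ZMod (d*k))) = _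
        rw [map_sub, map_natCast, map_natCast, hfval, ZMod.natCast_mod]
      rw [Finset.sum_congr rfl (fun j _ => hterm j), Finset.sum_sub_distrib]
      have h2 : ∑ j : Fin k, (((f j : Fin k):ℕ) : ZMod k) = ∑ j : Fin k, ((j:ℕ) : ZMod k) :=
        Equiv.sum_comp (Equiv.ofBijective f hfbij) (fun j : Fin k => ((j:ℕ) : ZMod k))
      rw [h2, sub_self]
    exact (ZMod.natCast_eq_zero_iff _ _).mp hcast
  -- counting
  classical
  have hval : ∀ x : Fin (d*k), ((σ x : Fin (d*k)):ℕ) = ((x:ℕ) + (μ x).val) % (d*k) := by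
    intro x
    have h1 := congrArg ZMod.val (hσμ x)
    rw [ZMod.val_add] at h1
    have h2 : (ι (σ x)).val = ((σ x : Fin (d*k)):ℕ) := ZMod.val_cast_of_lt (σ x).2
    have h3 : (ι x).val = (x:ℕ) := ZMod.val_cast_of_lt x.2
    rw [h2, h3] at h1
    exact h1
  have hμval : ∀ x : Fin (d*k), (μ x).val < d*k := fun x => ZMod.val_lt _
  have hcase : ∀ x : Fin (d*k),
      ((x:ℕ) + (μ x).val < d*k ∧ ((σ x : Fin (d*k)):ℕ) = (x:ℕ) + (μ x).val) ∨
      (d*k ≤ (x:ℕ) + (μ x).val ∧ ((σ x : Fin (d*k)):ℕ) + d*k = (x:ℕ) + (μ x).val) := by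
    intro x
    rcases lt_or_ge ((x:ℕ) + (μ x).val) (d*k) with h | h
    · exact Or.inl ⟨h, by rw [hval, Nat.mod_eq_of_lt h]⟩
    · refine Or.inr ⟨h, ?_⟩
      have h1 : (x:ℕ) < d*k := x.2
      have h2 := hμval x
      rw [hval, Nat.mod_eq_sub_mod h, Nat.mod_eq_of_lt (by omega)]
      omega
  set C : Finset (Fin (d*k)) := Finset.univ.filter (fun x => ((σ x : Fin (d*k)):ℕ) < (x:ℕ)) with hCdef
  set T := C.card with hTdef
  have hCiff : ∀ x : Fin (d*k), (((σ x : Fin (d*k)):ℕ) < (x:ℕ)) ↔ d*k ≤ (x:ℕ) + (μ x).val := by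
    intro x
    have h2 := hμval x
    rcases hcase x with ⟨h3, h4⟩ | ⟨h3, h4⟩ <;> omega
  have hptint : ∀ x : Fin (d*k), (((σ x : Fin (d*k)):ℕ) : ℤ)
      = ((x:ℕ) : ℤ) + ((μ x).val : ℤ) - (if d*k ≤ (x:ℕ) + (μ x).val then ((d*k : ℕ) : ℤ) else 0) := by
    intro x
    rcases hcase x with ⟨h3, h4⟩ | ⟨h3, h4⟩
    · rw [if_neg (by omega)]; omega
    · rw [if_pos h3]; omega
  have hsumval : ∑ x : Fin (d*k), (((σ x : Fin (d*k)):ℕ) : ℤ) = ∑ x : Fin (d*k), ((x:ℕ) : ℤ) :=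
    Equiv.sum_comp σ (fun x : Fin (d*k) => ((x:ℕ) : ℤ))
  have hif : ∑ x : Fin (d*k), (if d*k ≤ (x:ℕ) + (μ x).val then ((d*k : ℕ):ℤ) else 0)
      = (T : ℤ) * ((d*k : ℕ) : ℤ) := by
    rw [← Finset.sum_filter]
    rw [Finset.sum_const]
    have he : Finset.univ.filter (fun x : Fin (d*k) => d*k ≤ (x:ℕ) + (μ x).val) = C := by
      rw [hCdef]
      apply Finset.filter_congr
      intro x _
      exact (hCiff x).symm
    rw [he, ← hTdef, nsmul_eq_mul]
  have hsum1 : ∑ x : Fin (d*k), (((μ x).val : ℕ) : ℤ) = (T : ℤ) * ((d*k : ℕ) : ℤ) := by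
    have h := hsumval
    rw [Finset.sum_congr rfl (fun x _ => hptint x), Finset.sum_sub_distrib,
      Finset.sum_add_distrib, hif] at h
    linarith
  have hconst : ∀ (a : Fin d) (b : Fin k), μ (finProdFinEquiv (a, b)) = μ (emb b) := by
    intro a b
    apply hμclass
    show ((b:ℕ) + k * (a:ℕ)) % k = ((emb b : Fin (d*k)):ℕ) % k
    rw [Nat.add_mul_mod_self_left]
  set B : ℕ := ∑ j : Fin k, (μ (emb j)).val with hBdef
  have hBc : ∑ j : Fin k, (((μ (emb j)).val : ℕ) : ℤ) = (B : ℤ) := by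
    rw [hBdef]; push_cast; rfl
  have hsum2 : ∑ x : Fin (d*k), (((μ x).val : ℕ) : ℤ) = (d:ℤ) * (B : ℤ) := by
    rw [← Equiv.sum_comp finProdFinEquiv (fun x : Fin (d*k) => (((μ x).val : ℕ) : ℤ)),
      Fintype.sum_prod_type]
    rw [Finset.sum_congr rfl (fun a _ => Finset.sum_congr rfl (fun b _ => by rw [hconst a b]))]
    rw [Finset.sum_const, Finset.card_univ, Fintype.card_fin, nsmul_eq_mul, hBc]
  have hBT : B = k * T := by
    have hcast : (B:ℤ) = (k:ℤ) * (T:ℤ) := by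
      have h1 : (d:ℤ) * (B:ℤ) = (d:ℤ) * ((k:ℤ) * (T:ℤ)) := by
        rw [← hsum2, hsum1]; push_cast; ring
      exact mul_left_cancel₀ (by exact_mod_cast hd.ne') h1
    exact_mod_cast hcast
  have hBsval : S.val = B % (d*k) := by
    have hS2 : S = ((B : ℕ) : ZMod (d*k)) := by
      rw [hSdef, hBdef, Nat.cast_sum]
      exact Finset.sum_congr rfl (fun j _ => (ZMod.natCast_zmod_val _).symm)
    rw [hS2, ZMod.val_natCast]
  have hgcd1 : Nat.gcd (d*k) S.val = k * Nat.gcd d T := by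
    rw [hBsval, hBT]
    calc Nat.gcd (d*k) ((k*T) % (d*k)) = Nat.gcd ((k*T) % (d*k)) (d*k) := Nat.gcd_comm _ _
    _ = Nat.gcd (d*k) (k*T) := (Nat.gcd_rec _ _).symm
    _ = Nat.gcd (k*d) (k*T) := by rw [mul_comm d k]
    _ = k * Nat.gcd d T := Nat.gcd_mul_left k d T
  set g := Nat.gcd d T with hgdef
  have hgdvd : g ∣ d := Nat.gcd_dvd_left d T
  have hofin : o = d / g := by
    rw [hoval, hgcd1, mul_comm d k]
    exact Nat.mul_div_mul_left _ _ hk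
  have hdiv : d * k / r = g := by
    rw [hreq, hofin, mul_comm d k, Nat.mul_div_mul_left _ _ hk]
    exact Nat.div_div_self hgdvd hd.ne'
  rw [hdiv]
  set A : Finset (Fin (d*k)) := Finset.univ.filter (fun x => (x:ℕ) < ((σ x : Fin (d*k)):ℕ)) with hAdef
  have hAcard : excNum σ = A.card := rfl
  set Bf : Finset (Fin (d*k)) := Finset.univ.filter (fun x => σ x = x) with hBfdef
  have hpart : A.card + (Bf.card + T) = d*k := by
    have hsplit := Finset.card_filter_add_card_filter_not
      (s := (Finset.univ : Finset (Fin (d*k)))) (p := fun x : Fin (d*k) => (x:ℕ) < ((σ x : Fin (d*k)):ℕ))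
    have hBC : Finset.univ.filter (fun x : Fin (d*k) => ¬ ((x:ℕ) < ((σ x : Fin (d*k)):ℕ))) = Bf ∪ C := by
      ext x
      rw [hBfdef, hCdef]
      simp only [Finset.mem_filter, Finset.mem_union, Finset.mem_univ, true_and]
      rw [show (σ x = x) ↔ ((σ x : Fin (d*k)):ℕ) = (x:ℕ) from ⟨fun h => by rw [h], fun h => Fin.ext h⟩]
      omega
    have hdisj : Disjoint Bf C := by
      rw [Finset.disjoint_left]
      intro x hx hx2
      rw [hBfdef, Finset.mem_filter] at hx
      rw [hCdef, Finset.mem_filter] at hx2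
      exact absurd hx2.2 (by rw [hx.2]; exact lt_irrefl _)
    rw [hBC, Finset.card_union_of_disjoint hdisj] at hsplit
    rw [← hAdef, ← hTdef] at hsplit
    simpa using hsplit
  rw [hAcard]
  by_cases hB0 : Bf.card = 0
  · have hAT : A.card + T = d*k := by omega
    apply Nat.dvd_antisymm
    · apply Nat.dvd_gcd
      · exact Nat.gcd_dvd_right _ _
      · have h1 : Nat.gcd A.card d ∣ d*k := Dvd.dvd.mul_right (Nat.gcd_dvd_right _ _) k
        have h2 : T = d*k - A.card := by omega
        rw [h2]
        exact Nat.dvd_sub h1 (Nat.gcd_dvd_left _ _)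
    · apply Nat.dvd_gcd
      · have h1 : g ∣ d*k := Dvd.dvd.mul_right hgdvd k
        have h2 : A.card = d*k - T := by omega
        rw [h2]
        exact Nat.dvd_sub h1 (Nat.gcd_dvd_right _ _)
      · exact hgdvd
  · obtain ⟨x, hxmem⟩ := Finset.card_pos.mp (Nat.pos_of_ne_zero hB0)
    rw [hBfdef, Finset.mem_filter] at hxmem
    have hr1 : r = 1 := by
      rw [← hr x]
      exact Function.minimalPeriod_eq_one_iff_isFixedPt.mpr hxmem.2
    have hid : ∀ y : Fin (d*k), σ y = y := by
      intro y
      apply Function.minimalPeriod_eq_one_iff_isFixedPt.mp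
      rw [hr y, hr1]
    have hA0 : A.card = 0 := by
      rw [hAdef, Finset.card_eq_zero, Finset.filter_eq_empty_iff]
      intro x _
      rw [hid x]
      omega
    have hT0 : T = 0 := by
      rw [hTdef, hCdef, Finset.card_eq_zero, Finset.filter_eq_empty_iff]
      intro x _
      rw [hid x]
      omega
    rw [hA0, hgdef, hT0]
    simp
end

section
/- Let k, b, c be positive integers with c | b. Then (t A_{k−1}(t) [b]_t^k)_{b,c} = c^{k−1} (t^c A_{k−1}(t^c) [b/c]_{t^c}^k)_{b,c}, where for a power series f(t) = Σ_j a_j t^j, f(t)_{b,c} denotes Σ_{j : gcd(j,b)=c} a_j t^j. -/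
open Finset Equiv

/-- The operation `f(t) ↦ f(t)_{b,c}` erasing all terms `a_j t^j` with `gcd(j, b) ≠ c`. -/
noncomputable def restrictGcd (b c : ℕ) (f : Polynomial ℚ) : Polynomial ℚ :=
  ∑ j ∈ f.support.filter (fun j => Nat.gcd j b = c), Polynomial.monomial j (f.coeff j)

noncomputable def theta (f : PowerSeries ℚ) : PowerSeries ℚ :=
  PowerSeries.mk fun m => (m : ℚ) * PowerSeries.coeff m f

lemma theta_coeff (f : PowerSeries ℚ) (m : ℕ) :
    PowerSeries.coeff m (theta f) = (m : ℚ) * PowerSeries.coeff m f := by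
  simp [theta]

lemma theta_mul (f g : PowerSeries ℚ) : theta (f * g) = theta f * g + f * theta g := by
  ext m
  simp only [theta_coeff, map_add, PowerSeries.coeff_mul, theta_coeff, Finset.mul_sum]
  rw [← Finset.sum_add_distrib]
  apply Finset.sum_congr rfl
  intro x hx
  rw [Finset.HasAntidiagonal.mem_antidiagonal] at hx
  rw [← hx]
  push_cast
  ring

lemma theta_X_pow (m : ℕ) : theta ((PowerSeries.X : PowerSeries ℚ) ^ m) = (m : ℚ) • (PowerSeries.X ^ m) := by
  ext n
  simp only [theta_coeff, PowerSeries.coeff_X_pow, PowerSeries.coeff_smul, smul_eq_mul]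
  by_cases h : n = m <;> simp [h]

lemma theta_one : theta (1 : PowerSeries ℚ) = 0 := by
  have := theta_X_pow 0
  simpa using this

lemma theta_pow (f : PowerSeries ℚ) (k : ℕ) :
    theta (f ^ k) = (k : ℚ) • (theta f * f ^ (k - 1)) := by
  induction k with
  | zero => simpa using theta_one
  | succ k ih =>
    rw [pow_succ, theta_mul, ih]
    cases k with
    | zero => simp
    | succ k =>
      rw [Nat.add_sub_cancel] at *
      rw [smul_mul_assoc, mul_assoc, ← pow_succ]
      push_cast
      have h2 : f ^ (k+1) * theta f = theta f * f ^ (k+1) := mul_comm _ _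
      rw [h2]
      module

lemma theta_sum {ι : Type*} (s : Finset ι) (f : ι → PowerSeries ℚ) :
    theta (∑ i ∈ s, f i) = ∑ i ∈ s, theta (f i) := by
  ext n
  simp [theta_coeff, Finset.mul_sum]

lemma excNum_eq_sum {n : ℕ} (σ : Equiv.Perm (Fin n)) :
    excNum σ = ∑ i : Fin n, if (i : ℕ) < (σ i : ℕ) then 1 else 0 := by
  rw [excNum, Finset.card_filter]

lemma excNum_le {n : ℕ} (σ : Equiv.Perm (Fin n)) : excNum σ ≤ n := by
  classical
  calc excNum σ ≤ (Finset.univ : Finset (Fin n)).card := Finset.card_filter_le _ _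
  _ = n := by simp

lemma exc_decompose_zero {n : ℕ} (e : Equiv.Perm (Fin n)) :
    excNum (Equiv.Perm.decomposeFin.symm (0, e)) = excNum e := by
  rw [excNum_eq_sum, excNum_eq_sum, Fin.sum_univ_succ]
  simp [Equiv.Perm.decomposeFin_symm_apply_zero, Equiv.Perm.decomposeFin_symm_apply_succ,
    Nat.succ_lt_succ_iff]

lemma exc_decompose_succ {n : ℕ} (e : Equiv.Perm (Fin n)) (q : Fin n) :
    excNum (Equiv.Perm.decomposeFin.symm (q.succ, e)) =
      if (e.symm q : ℕ) < (q : ℕ) then excNum e else excNum e + 1 := by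
  rw [excNum_eq_sum (Equiv.Perm.decomposeFin.symm (q.succ, e)), Fin.sum_univ_succ]
  have h0 : ((0 : Fin (n+1)) : ℕ) < ((Equiv.Perm.decomposeFin.symm (q.succ, e)) 0 : ℕ) := by
    simp [Equiv.Perm.decomposeFin_symm_apply_zero]
  rw [if_pos h0]
  have hterm : ∀ i : Fin n,
      (if ((i.succ : Fin (n+1)) : ℕ) < ((Equiv.Perm.decomposeFin.symm (q.succ, e)) i.succ : ℕ)
        then 1 else 0)
      = (if (e i ≠ q ∧ (i : ℕ) < (e i : ℕ)) then 1 else 0) := by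
    intro i
    rw [Equiv.Perm.decomposeFin_symm_apply_succ]
    by_cases h : e i = q
    · have hs : Equiv.swap (0 : Fin (n+1)) q.succ (e i).succ = 0 := by
        rw [h, Equiv.swap_apply_right]
      rw [hs]
      simp [h]
    · have hne0 : ((e i).succ : Fin (n+1)) ≠ 0 := Fin.succ_ne_zero _
      have hneq : ((e i).succ : Fin (n+1)) ≠ q.succ := by
        simpa [Fin.succ_inj] using h
      rw [Equiv.swap_apply_of_ne_of_ne hne0 hneq]
      simp [h, Nat.succ_lt_succ_iff, Fin.val_succ]
  rw [Finset.sum_congr rfl (fun i _ => hterm i)]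
  have hsplit : ∀ i : Fin n, (if (i : ℕ) < (e i : ℕ) then (1:ℕ) else 0)
      = (if (e i ≠ q ∧ (i : ℕ) < (e i : ℕ)) then 1 else 0)
        + (if (e i = q ∧ (i : ℕ) < (e i : ℕ)) then 1 else 0) := by
    intro i
    by_cases h : e i = q <;> by_cases h2 : (i : ℕ) < (e i : ℕ) <;> simp [h, h2]
  have hexc : excNum e = (∑ i : Fin n, if (e i ≠ q ∧ (i : ℕ) < (e i : ℕ)) then 1 else 0)
      + (∑ i : Fin n, if (e i = q ∧ (i : ℕ) < (e i : ℕ)) then 1 else 0) := by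
    rw [excNum_eq_sum, Finset.sum_congr rfl (fun i _ => hsplit i), Finset.sum_add_distrib]
  have hsingle : (∑ i : Fin n, if (e i = q ∧ (i : ℕ) < (e i : ℕ)) then 1 else 0)
      = if (e.symm q : ℕ) < (q : ℕ) then 1 else 0 := by
    rw [Finset.sum_eq_single (e.symm q)]
    · simp
    · intro i _ hi
      have : e i ≠ q := fun h => hi (by rw [← h]; simp)
      simp [this]
    · simp
  rw [hsingle] at hexc
  by_cases h : (e.symm q : ℕ) < (q : ℕ) <;> simp [h] at hexc ⊢ <;> omega

lemma star {M : Type*} [AddCommMonoid M] (n : ℕ) (F : ℕ → M) :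
    ∑ τ : Equiv.Perm (Fin (n+1)), F (excNum τ)
      = ∑ e : Equiv.Perm (Fin n),
          (F (excNum e) + excNum e • F (excNum e) + (n - excNum e) • F (excNum e + 1)) := by
  classical
  rw [← Equiv.sum_comp (Equiv.Perm.decomposeFin (n := n)).symm (fun τ => F (excNum τ)),
    Fintype.sum_prod_type, Finset.sum_comm]
  apply Finset.sum_congr rfl
  intro e _
  rw [Fin.sum_univ_succ, exc_decompose_zero]
  have hterm : ∀ q : Fin n, F (excNum (Equiv.Perm.decomposeFin.symm (q.succ, e)))
      = if (e.symm q : ℕ) < (q : ℕ) then F (excNum e) else F (excNum e + 1) := by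
    intro q; rw [exc_decompose_succ]; exact apply_ite F _ _ _
  rw [Finset.sum_congr rfl fun q _ => hterm q,
    ← Equiv.sum_comp e
      (fun q => if (e.symm q : ℕ) < (q : ℕ) then F (excNum e) else F (excNum e + 1))]
  simp only [Equiv.symm_apply_apply]
  rw [Finset.sum_ite, Finset.sum_const, Finset.sum_const]
  have hc1 : (Finset.univ.filter fun i : Fin n => (i : ℕ) < (e i : ℕ)).card = excNum e := rfl
  have hc2 : (Finset.univ.filter fun i : Fin n => ¬ (i : ℕ) < (e i : ℕ)).card
      = n - excNum e := by
    have := Finset.card_filter_add_card_filter_not (s := (Finset.univ : Finset (Fin n)))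
      (p := fun i : Fin n => (i : ℕ) < (e i : ℕ))
    simp only [Finset.card_univ, Fintype.card_fin] at this
    rw [excNum]
    omega
  rw [hc1, hc2, add_assoc]


noncomputable def Gser (K : ℕ) : PowerSeries ℚ :=
  PowerSeries.mk fun m => if m = 0 then 0 else (m : ℚ) ^ K

noncomputable def Aps (K : ℕ) : PowerSeries ℚ :=
  ∑ σ : Equiv.Perm (Fin K), PowerSeries.X ^ excNum σ

lemma theta_Gser (K : ℕ) : theta (Gser K) = Gser (K + 1) := by
  ext m
  rw [theta_coeff]
  simp only [Gser, PowerSeries.coeff_mk]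
  by_cases h : m = 0
  · simp [h]
  · rw [if_neg h, if_neg h, pow_succ, mul_comm ((m:ℚ)^K) (m:ℚ)]

lemma theta_one_sub_X : theta (1 - PowerSeries.X : PowerSeries ℚ) = - PowerSeries.X := by
  ext m
  rw [theta_coeff]
  simp only [map_sub, map_neg, PowerSeries.coeff_one, PowerSeries.coeff_X]
  rcases m with _ | _ | m <;> simp

lemma Aps_zero : Aps 0 = 1 := by
  rw [Aps]
  rw [Fintype.sum_subsingleton _ (1 : Equiv.Perm (Fin 0))]
  have : excNum (1 : Equiv.Perm (Fin 0)) = 0 := rfl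
  rw [this, pow_zero]

lemma Aps_succ (n : ℕ) : Aps (n + 1)
    = ∑ e : Equiv.Perm (Fin n),
        ((PowerSeries.X : PowerSeries ℚ) ^ excNum e + excNum e • PowerSeries.X ^ excNum e
          + (n - excNum e) • PowerSeries.X ^ (excNum e + 1)) := by
  rw [Aps]
  exact star n (fun j => (PowerSeries.X : PowerSeries ℚ) ^ j)

theorem GS (K : ℕ) :
    ((1 - PowerSeries.X) ^ (K + 1) : PowerSeries ℚ) * Gser K = PowerSeries.X * Aps K := by
  induction K with
  | zero =>
    rw [Aps_zero, mul_one, pow_one]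
    ext m
    rw [sub_mul, one_mul, map_sub]
    cases m with
    | zero => simp [Gser]
    | succ m =>
      rw [PowerSeries.coeff_succ_X_mul]
      simp only [Gser, PowerSeries.coeff_mk, PowerSeries.coeff_X]
      rcases m with _ | m <;> simp
  | succ K ih =>
    have hth := congrArg theta ih
    rw [theta_mul, theta_pow, theta_one_sub_X, Nat.add_sub_cancel, theta_Gser,
      PowerSeries.smul_eq_C_mul] at hth
    have key2 : ((1 - PowerSeries.X) ^ (K + 2) : PowerSeries ℚ) * Gser (K+1)
        = (1 - PowerSeries.X) * theta (PowerSeries.X * Aps K)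
          + PowerSeries.C ((K:ℚ) + 1) * (PowerSeries.X * (PowerSeries.X * Aps K)) := by
      push_cast at hth
      linear_combination (1 - PowerSeries.X) * hth
        + PowerSeries.C ((K:ℚ) + 1) * PowerSeries.X * ih
    rw [key2]
    have hXA : PowerSeries.X * Aps K
        = ∑ e : Equiv.Perm (Fin K), (PowerSeries.X : PowerSeries ℚ) ^ (excNum e + 1) := by
      rw [Aps, Finset.mul_sum]
      exact Finset.sum_congr rfl fun e _ => by rw [pow_succ, mul_comm]
    rw [hXA, theta_sum, Aps_succ]
    simp only [Finset.mul_sum, Finset.smul_sum]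
    rw [← Finset.sum_add_distrib]
    apply Finset.sum_congr rfl
    intro e _
    rw [theta_X_pow]
    have hle : excNum e ≤ K := excNum_le e
    have hcast : ((K - excNum e : ℕ) : ℚ) = (K : ℚ) - (excNum e : ℚ) := by
      push_cast [hle]; ring
    rw [← Nat.cast_smul_eq_nsmul ℚ (excNum e), ← Nat.cast_smul_eq_nsmul ℚ (K - excNum e), hcast]
    simp only [PowerSeries.smul_eq_C_mul, map_add, map_sub, map_one, Nat.cast_add, Nat.cast_one]
    ring

lemma coe_eulerian (K : ℕ) :
    ((eulerianExc K : Polynomial ℚ) : PowerSeries ℚ) = Aps K := by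
  rw [eulerianExc, Aps, ← Polynomial.coeToPowerSeries.ringHom_apply, map_sum]
  apply Finset.sum_congr rfl
  intro e _
  rw [map_pow, Polynomial.coeToPowerSeries.ringHom_apply, Polynomial.coe_X]

lemma one_sub_mul_geom (n : ℕ) :
    ((1 - Polynomial.X : Polynomial ℚ)) * (∑ i ∈ Finset.range n, Polynomial.X ^ i)
      = 1 - Polynomial.X ^ n := by
  have h := geom_sum_mul (Polynomial.X : Polynomial ℚ) n
  linear_combination -h

lemma Gser_coeff_mul {c : ℕ} (hc : 0 < c) (K x : ℕ) :
    PowerSeries.coeff (c * x) (Gser K) = (c : ℚ) ^ K * PowerSeries.coeff x (Gser K) := by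
  simp only [Gser, PowerSeries.coeff_mk]
  rcases Nat.eq_zero_or_pos x with rfl | hx
  · simp
  · have h1 : c * x ≠ 0 := by positivity
    rw [if_neg h1, if_neg hx.ne']
    push_cast
    ring

lemma DIL {c : ℕ} (hc : 0 < c) (P : Polynomial ℚ) (K m : ℕ) :
    PowerSeries.coeff (c * m) (((Polynomial.expand ℚ c P : Polynomial ℚ) : PowerSeries ℚ) * Gser K)
      = (c : ℚ) ^ K * PowerSeries.coeff m ((P : PowerSeries ℚ) * Gser K) := by
  rw [PowerSeries.coeff_mul, PowerSeries.coeff_mul,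
    Finset.Nat.sum_antidiagonal_eq_sum_range_succ_mk, Finset.Nat.sum_antidiagonal_eq_sum_range_succ_mk,
    Finset.mul_sum]
  have hterm : ∀ p : ℕ,
      PowerSeries.coeff p ((Polynomial.expand ℚ c P : Polynomial ℚ) : PowerSeries ℚ)
      = if c ∣ p then P.coeff (p / c) else 0 := by
    intro p
    rw [Polynomial.coeff_coe, Polynomial.coeff_expand hc]
  rw [Finset.sum_congr rfl (fun p _ => by rw [hterm p])]
  rw [← Finset.sum_filter_of_ne (p := fun p => c ∣ p) (fun p _ hne => by
    by_contra h
    exact hne (by rw [if_neg h, zero_mul]))]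
  apply Finset.sum_bij' (i := fun p _ => p / c) (j := fun q _ => c * q)
  · intro p hp
    rw [Finset.mem_filter, Finset.mem_range] at hp
    rw [Finset.mem_range]
    obtain ⟨q, rfl⟩ := hp.2
    rw [Nat.mul_div_cancel_left _ hc]
    have h1 : c * q ≤ c * m := Nat.lt_succ_iff.mp hp.1
    have h2 : q ≤ m := Nat.le_of_mul_le_mul_left h1 hc
    omega
  · intro q hq
    rw [Finset.mem_range] at hq
    rw [Finset.mem_filter, Finset.mem_range]
    exact ⟨by nlinarith, Dvd.intro q rfl⟩
  · intro p hp
    rw [Finset.mem_filter] at hp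
    exact Nat.mul_div_cancel' hp.2
  · intro q _
    exact Nat.mul_div_cancel_left _ hc
  · intro p hp
    rw [Finset.mem_filter] at hp
    obtain ⟨q, rfl⟩ := hp.2
    rw [if_pos (Dvd.intro q rfl), Nat.mul_div_cancel_left _ hc, Polynomial.coeff_coe]
    have hsub : c * m - c * q = c * (m - q) := (Nat.mul_sub_left_distrib c m q).symm
    rw [hsub, Gser_coeff_mul hc]
    ring

lemma restrictGcd_coeff (b c : ℕ) (f : Polynomial ℚ) (j : ℕ) :
    (restrictGcd b c f).coeff j = if Nat.gcd j b = c then f.coeff j else 0 := by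
  rw [restrictGcd, Polynomial.finset_sum_coeff]
  simp only [Polynomial.coeff_monomial]
  by_cases hsupp : j ∈ f.support
  · by_cases hg : Nat.gcd j b = c
    · rw [if_pos hg, Finset.sum_eq_single j]
      · simp
      · intro i _ hij
        rw [if_neg hij]
      · intro h
        refine absurd ?_ h
        rw [Finset.mem_filter]
        exact ⟨hsupp, hg⟩
    · rw [if_neg hg, Finset.sum_eq_zero]
      intro i hi
      rw [Finset.mem_filter] at hi
      by_cases hij : i = j
      · exact absurd (hij ▸ hi.2) hg
      · rw [if_neg hij]
  · have hf : f.coeff j = 0 := Polynomial.notMem_support_iff.mp hsupp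
    rw [hf, ite_self, Finset.sum_eq_zero]
    intro i hi
    rw [Finset.mem_filter] at hi
    by_cases hij : i = j
    · rw [hij]; simp [hf]
    · rw [if_neg hij]

/-- For positive integers `k, b, c` with `c ∣ b`:
`(t A_{k−1}(t) [b]_t^k)_{b,c} = c^{k−1} (t^c A_{k−1}(t^c) [b/c]_{t^c}^k)_{b,c}`. -/
theorem restrictGcd_eulerian (k b c : ℕ) (hk : 0 < k) (hb : 0 < b) (hc : 0 < c)
    (hcb : c ∣ b) :
    restrictGcd b c
        (Polynomial.X * eulerianExc (k - 1) * (∑ i ∈ Finset.range b, Polynomial.X ^ i) ^ k) =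
      Polynomial.C ((c : ℚ) ^ (k - 1)) *
        restrictGcd b c
          (Polynomial.X ^ c * (eulerianExc (k - 1)).comp (Polynomial.X ^ c) *
            (∑ i ∈ Finset.range (b / c), (Polynomial.X ^ c) ^ i) ^ k) := by
  obtain ⟨K, rfl⟩ : ∃ K, k = K + 1 := ⟨k - 1, (Nat.succ_pred_eq_of_pos hk).symm⟩
  simp only [Nat.add_sub_cancel]
  set d := b / c with hd
  have hbcd : b = c * d := (Nat.mul_div_cancel' hcb).symm
  have hdpos : 0 < d := by
    rcases Nat.eq_zero_or_pos d with h | h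
    · rw [h, mul_zero] at hbcd; omega
    · exact h
  set Q : Polynomial ℚ :=
    Polynomial.X * eulerianExc K * (∑ i ∈ Finset.range d, Polynomial.X ^ i) ^ (K + 1) with hQ
  set L : Polynomial ℚ :=
    Polynomial.X * eulerianExc K * (∑ i ∈ Finset.range b, Polynomial.X ^ i) ^ (K + 1) with hL
  set P : Polynomial ℚ := ((1 : Polynomial ℚ) - Polynomial.X ^ d) ^ (K + 1) with hP
  -- RHS inner polynomial is expand c Q
  have hexp1 : Polynomial.expand ℚ c (eulerianExc K) = (eulerianExc K).comp (Polynomial.X ^ c) :=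
    Polynomial.expand_eq_comp_X_pow c
  have hexp2 : Polynomial.expand ℚ c (∑ i ∈ Finset.range d, Polynomial.X ^ i)
      = ∑ i ∈ Finset.range d, (Polynomial.X ^ c) ^ i := by
    rw [map_sum]
    exact Finset.sum_congr rfl fun i _ => by rw [map_pow, Polynomial.expand_X]
  have hR : Polynomial.X ^ c * (eulerianExc K).comp (Polynomial.X ^ c) *
      (∑ i ∈ Finset.range d, (Polynomial.X ^ c) ^ i) ^ (K + 1) = Polynomial.expand ℚ c Q := by
    rw [hQ, map_mul, map_mul, map_pow, Polynomial.expand_X, hexp1, hexp2]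
  -- coercion identities
  have hcoe1S : ∀ n : ℕ, (((1 - Polynomial.X) * (∑ i ∈ Finset.range n, Polynomial.X ^ i)
        : Polynomial ℚ) : PowerSeries ℚ)
      = (1 - PowerSeries.X) * ((∑ i ∈ Finset.range n, Polynomial.X ^ i : Polynomial ℚ)
        : PowerSeries ℚ) := by
    intro n
    rw [Polynomial.coe_mul]
    congr 1
    rw [← Polynomial.coeToPowerSeries.ringHom_apply, map_sub, map_one,
      Polynomial.coeToPowerSeries.ringHom_apply, Polynomial.coe_X]
  have hQcoe : ((Q : Polynomial ℚ) : PowerSeries ℚ) = (P : PowerSeries ℚ) * Gser K := by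
    rw [hQ, hP, ← one_sub_mul_geom d, Polynomial.coe_mul, Polynomial.coe_mul, Polynomial.coe_X,
      coe_eulerian, Polynomial.coe_pow, Polynomial.coe_pow, hcoe1S, mul_pow]
    linear_combination -(((∑ i ∈ Finset.range d, Polynomial.X ^ i : Polynomial ℚ) :
      PowerSeries ℚ)) ^ (K+1) * GS K
  have hPE : Polynomial.expand ℚ c P = ((1 : Polynomial ℚ) - Polynomial.X ^ b) ^ (K + 1) := by
    rw [hP, map_pow, map_sub, map_one, map_pow, Polynomial.expand_X, ← pow_mul, ← hbcd]
  have hLcoe : ((L : Polynomial ℚ) : PowerSeries ℚ)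
      = ((Polynomial.expand ℚ c P : Polynomial ℚ) : PowerSeries ℚ) * Gser K := by
    rw [hL, hPE, ← one_sub_mul_geom b, Polynomial.coe_mul, Polynomial.coe_mul, Polynomial.coe_X,
      coe_eulerian, Polynomial.coe_pow, Polynomial.coe_pow, hcoe1S, mul_pow]
    linear_combination -(((∑ i ∈ Finset.range b, Polynomial.X ^ i : Polynomial ℚ) :
      PowerSeries ℚ)) ^ (K+1) * GS K
  -- now compare coefficients
  rw [hR]
  apply Polynomial.ext
  intro j
  rw [Polynomial.coeff_C_mul, restrictGcd_coeff, restrictGcd_coeff]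
  by_cases hg : Nat.gcd j b = c
  · rw [if_pos hg, if_pos hg]
    have hcj : c ∣ j := hg ▸ Nat.gcd_dvd_left j b
    obtain ⟨m, rfl⟩ := hcj
    have hLc : L.coeff (c * m) = (c : ℚ) ^ K * Q.coeff m := by
      rw [← Polynomial.coeff_coe, hLcoe, DIL hc, ← hQcoe, Polynomial.coeff_coe]
    have hRc : (Polynomial.expand ℚ c Q).coeff (c * m) = Q.coeff m :=
      Polynomial.coeff_expand_mul' hc Q m
    rw [hLc, hRc]
  · rw [if_neg hg, if_neg hg, mul_zero]
end
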